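/- arXiv:math/0205034 — 5 statements merged into one kernel-verified Lean document; each statement's English description precedes it below -/
import Mathlib

section
/- Let k be a field, let a, b, n be positive integers with n ≥ 2, and let y_1, …, y_b be elements of the free associative algebra k⟨x_1, …, x_a⟩, each a k-linear combination of words of length at most n−1. Let S = k⟨x_1, …, x_a⟩/(y_1, …, y_b), let S_i ⊆ S be the image of the k-span of words of length at most i, and let C ⊆ M_n(S) be the subalgebra of upper triangular matrices (m_{pq}) with m_{pq} ∈ S_{q−p} for q ≥ p. Then C has finite global dimension: there exists a natural number d such that every left C-module has projective dimension at most d. -/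
open scoped TensorProduct
open Function
open scoped DirectSum

set_option maxSynthPendingDepth 3
set_option maxHeartbeats 1000000
set_option synthInstance.maxHeartbeats 400000

universe u v w

section ProjRes

/-- A projective resolution of a left `R`-module `M`. -/
structure ProjRes (R : Type u) (M : Type v) [Ring R] [AddCommGroup M] [Module R M] :
    Type (max u (v + 1)) where
  P : ℕ → Type v
  [acg : ∀ i, AddCommGroup (P i)]
  [mod : ∀ i, Module R (P i)]
  d : ∀ i, P (i + 1) →ₗ[R] P i
  ε : P 0 →ₗ[R] M
  proj : ∀ i, Module.Projective R (P i)
  surj : Function.Surjective ε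
  exact0 : Function.Exact (d 0) ε
  exact : ∀ i, Function.Exact (d (i + 1)) (d i)

attribute [instance] ProjRes.acg ProjRes.mod

/-- `M` has projective dimension at most `n`: there is a projective resolution
which vanishes in degrees above `n`. -/
def ProjDimLE (R : Type u) (M : Type v) [Ring R] [AddCommGroup M] [Module R M]
    (n : ℕ) : Prop :=
  ∃ F : ProjRes R M, ∀ i, n < i → ∀ x : F.P i, x = 0

end ProjRes


section Abstract

/-- The data of a "triangular" system of idempotents. -/
structure IdemData (k : Type u) [Field k] {R : Type u} [Ring R] [Algebra k R] {n : ℕ} (e : Fin n → R) : Prop where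
  idem : ∀ p, e p * e p = e p
  sum_one : ∑ p, e p = 1
  tri : ∀ (p q : Fin n) (r : R), p < q → e q * r * e p = 0
  diag : ∀ (p : Fin n) (r : R), ∃ c : k, e p * r * e p = c • e p

variable (k : Type u) [Field k] {R : Type u} [Ring R] [Algebra k R]
variable {n : ℕ} (e : Fin n → R)

/-- The left ideal `R · e p`. -/
def Lmod (p : Fin n) : Submodule R R :=
  LinearMap.range (LinearMap.toSpanSingleton R R (e p))

lemma mem_Lmod_iff {p : Fin n} {x : R} : x ∈ Lmod e p ↔ ∃ r : R, r * e p = x := by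
  simp [Lmod, LinearMap.mem_range, LinearMap.toSpanSingleton_apply, smul_eq_mul]

lemma e_mem_Lmod (hd : IdemData k e) (p : Fin n) : e p ∈ Lmod e p :=
  (mem_Lmod_iff e).2 ⟨e p, hd.idem p⟩

lemma Lmod_mul_e (hd : IdemData k e) {p : Fin n} {x : R} (hx : x ∈ Lmod e p) :
    x * e p = x := by
  obtain ⟨r, rfl⟩ := (mem_Lmod_iff e).1 hx
  rw [mul_assoc, hd.idem]

lemma e_mul_Lmod_eq_zero (hd : IdemData k e) {p q : Fin n} (h : p < q) {x : R}
    (hx : x ∈ Lmod e p) : e q * x = 0 := by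
  obtain ⟨r, rfl⟩ := (mem_Lmod_iff e).1 hx
  rw [← mul_assoc]
  exact hd.tri p q r h

lemma e_mul_Lmod_diag (hd : IdemData k e) {p : Fin n} {x : R} (hx : x ∈ Lmod e p) :
    ∃ c : k, e p * x = c • e p := by
  obtain ⟨r, rfl⟩ := (mem_Lmod_iff e).1 hx
  rw [← mul_assoc]
  exact hd.diag p r

section ModuleConstr

variable (M : Type u) [AddCommGroup M] [Module R M]

/-- The image of `e p` acting on `M`, as an additive subgroup. -/
def VpSet (p : Fin n) : AddSubgroup M where
  carrier := Set.range (fun m : M => e p • m)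
  add_mem' := by rintro _ _ ⟨m1, rfl⟩ ⟨m2, rfl⟩; exact ⟨m1 + m2, smul_add _ _ _⟩
  zero_mem' := ⟨0, smul_zero _⟩
  neg_mem' := by rintro _ ⟨m, rfl⟩; exact ⟨-m, smul_neg _ _⟩

instance VpSMul (p : Fin n) : SMul k ↥(VpSet e M p) :=
  ⟨fun c x => ⟨algebraMap k R c • (x : M), by
    obtain ⟨m, hm⟩ := x.2
    refine ⟨algebraMap k R c • m, ?_⟩
    show e p • (algebraMap k R c • m) = algebraMap k R c • (x : M)
    rw [← hm]
    show e p • (algebraMap k R c • m) = algebraMap k R c • e p • m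
    rw [smul_smul, smul_smul, Algebra.commutes]⟩⟩

@[simp] lemma Vp_smul_coe (p : Fin n) (c : k) (x : ↥(VpSet e M p)) :
    ((c • x : ↥(VpSet e M p)) : M) = algebraMap k R c • (x : M) := rfl

instance VpModule (p : Fin n) : Module k ↥(VpSet e M p) where
  one_smul x := by apply Subtype.ext; simp
  mul_smul c c' x := by apply Subtype.ext; simp [map_mul, mul_smul]
  smul_zero c := by apply Subtype.ext; simp
  smul_add c x y := by apply Subtype.ext; simp [smul_add]
  add_smul c c' x := by apply Subtype.ext; simp [map_add, add_smul]
  zero_smul x := by apply Subtype.ext; simp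

instance LmodSMulComm (p : Fin n) : SMulCommClass k R ↥(Lmod e p) := by
  constructor
  intro c r x
  apply Subtype.ext
  show c • (r • (x : R)) = r • (c • (x : R))
  rw [smul_comm]

/-- The `p`-th building block `R·e_p ⊗ e_p M`. -/
abbrev TP (p : Fin n) : Type u := ↥(Lmod e p) ⊗[k] ↥(VpSet e M p)

/-- The projective cover `⨁ p, R·e_p ⊗ e_p M`. -/
abbrev PB : Type u := ⨁ (p : Fin n), TP k e M p

/-- The bilinear augmentation pairing. -/
noncomputable def epsBil (p : Fin n) : ↥(Lmod e p) →+ (↥(VpSet e M p) →+ M) where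
  toFun := fun x =>
    { toFun := fun v => (x : R) • (v : M)
      map_zero' := by simp
      map_add' := by intro v w; show (x : R) • ((v : M) + (w : M)) = _; rw [smul_add] }
  map_zero' := by
    ext v; show ((0 : ↥(Lmod e p)) : R) • (v : M) = 0; simp
  map_add' := by
    intro x y; ext v
    show (((x + y) : ↥(Lmod e p)) : R) • (v : M) = (x : R) • (v : M) + (y : R) • (v : M)
    rw [Submodule.coe_add, add_smul]

lemma epsBil_balance (p : Fin n) : ∀ (c : k) (x : ↥(Lmod e p)) (v : ↥(VpSet e M p)),
    epsBil e M p (c • x) v = epsBil e M p x (c • v) := by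
  intro c x v
  show ((c • x : ↥(Lmod e p)) : R) • (v : M) = (x : R) • ((c • v : ↥(VpSet e M p)) : M)
  rw [Vp_smul_coe]
  show (c • (x : R)) • (v : M) = (x : R) • algebraMap k R c • (v : M)
  rw [Algebra.smul_def, smul_smul, Algebra.commutes]

/-- Component of the augmentation map. -/
noncomputable def epsC (p : Fin n) : TP k e M p →ₗ[R] M where
  toFun := TensorProduct.liftAddHom (epsBil e M p) (epsBil_balance k e M p)
  map_add' := by intro x y; simp
  map_smul' := by
    intro r x
    show TensorProduct.liftAddHom (epsBil e M p) (epsBil_balance k e M p) (r • x)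
      = r • TensorProduct.liftAddHom (epsBil e M p) (epsBil_balance k e M p) x
    induction x using TensorProduct.induction_on with
    | zero => simp
    | tmul a v =>
        rw [TensorProduct.smul_tmul']
        show TensorProduct.liftAddHom (epsBil e M p) (epsBil_balance k e M p) ((r • a) ⊗ₜ[k] v)
          = r • TensorProduct.liftAddHom (epsBil e M p) (epsBil_balance k e M p) (a ⊗ₜ[k] v)
        rw [TensorProduct.liftAddHom_tmul, TensorProduct.liftAddHom_tmul]
        show ((r • a : ↥(Lmod e p)) : R) • (v : M) = r • ((a : R) • (v : M))
        rw [SetLike.val_smul, smul_smul, smul_eq_mul, mul_smul]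
    | add x y hx hy => rw [smul_add, map_add, map_add, hx, hy, smul_add]

@[simp] lemma epsC_tmul (p : Fin n) (x : ↥(Lmod e p)) (v : ↥(VpSet e M p)) :
    epsC k e M p (x ⊗ₜ[k] v) = (x : R) • (v : M) := rfl

/-- The augmentation map `⨁ p, R·e_p ⊗ e_p M → M`. -/
noncomputable def bigEps : PB k e M →ₗ[R] M :=
  DirectSum.toModule R (Fin n) M (fun p => epsC k e M p)

@[simp] lemma bigEps_lof (p : Fin n) (x : TP k e M p) :
    bigEps k e M (DirectSum.lof R (Fin n) (fun p => TP k e M p) p x) = epsC k e M p x :=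
  DirectSum.toModule_lof R p x

lemma bigEps_surjective (hd : IdemData k e) : Function.Surjective (bigEps k e M) := by
  intro m
  refine ⟨∑ p : Fin n, DirectSum.lof R (Fin n) (fun p => TP k e M p) p
    ((⟨e p, e_mem_Lmod k e hd p⟩ : ↥(Lmod e p)) ⊗ₜ[k]
      (⟨e p • m, ⟨m, rfl⟩⟩ : ↥(VpSet e M p))), ?_⟩
  rw [map_sum]
  have : ∀ p : Fin n, bigEps k e M (DirectSum.lof R (Fin n) (fun p => TP k e M p) p
      ((⟨e p, e_mem_Lmod k e hd p⟩ : ↥(Lmod e p)) ⊗ₜ[k]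
        (⟨e p • m, ⟨m, rfl⟩⟩ : ↥(VpSet e M p)))) = e p • m := by
    intro p
    rw [bigEps_lof, epsC_tmul]
    show e p • e p • m = e p • m
    rw [smul_smul, hd.idem]
  rw [Finset.sum_congr rfl (fun p _ => this p), ← Finset.sum_smul, hd.sum_one, one_smul]

lemma proj_Lmod (hd : IdemData k e) (p : Fin n) : Module.Projective R ↥(Lmod e p) := by
  refine Module.Projective.of_split (M := R) (Lmod e p).subtype
    { toFun := fun r => ⟨r * e p, (mem_Lmod_iff e).2 ⟨r, rfl⟩⟩
      map_add' := by
        intro r s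
        apply Subtype.ext
        show (r + s) * e p = r * e p + s * e p
        rw [add_mul]
      map_smul' := by
        intro r s
        apply Subtype.ext
        show (r • s) * e p = r • (s * e p)
        rw [smul_eq_mul, smul_eq_mul, mul_assoc] } ?_
  ext x
  show (x : R) * e p = (x : R)
  exact Lmod_mul_e k e hd x.2

lemma proj_TP (hd : IdemData k e) (p : Fin n) : Module.Projective R (TP k e M p) := by
  haveI := proj_Lmod k e hd p
  exact Module.Projective.tensorProduct

lemma proj_PB (hd : IdemData k e) : Module.Projective R (PB k e M) := by
  haveI : ∀ p : Fin n, Module.Projective R (TP k e M p) := fun p => proj_TP k e M hd p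
  exact inferInstanceAs (Module.Projective R (Π₀ p : Fin n, TP k e M p))

lemma PB_triv (h : ∀ m : M, m = 0) : ∀ x : PB k e M, x = 0 := by
  intro x
  induction x using DirectSum.induction_on with
  | zero => rfl
  | of p y =>
      have hy : y = 0 := by
        induction y using TensorProduct.induction_on with
        | zero => rfl
        | tmul a v =>
            have hv : v = 0 := Subtype.ext (h (v : M))
            rw [hv, TensorProduct.tmul_zero]
        | add s t hs ht => rw [hs, ht, add_zero]
      rw [hy, map_zero]
  | add s t hs ht => rw [hs, ht, add_zero]

lemma modTriv (hd : IdemData k e) (h : ∀ q : Fin n, ∀ m : M, e q • m = 0) :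
    ∀ m : M, m = 0 := by
  intro m
  calc m = (1 : R) • m := (one_smul R m).symm
  _ = (∑ p : Fin n, e p) • m := by rw [hd.sum_one]
  _ = ∑ p : Fin n, e p • m := Finset.sum_smul
  _ = 0 := Finset.sum_eq_zero fun q _ => h q m

lemma supp_step (hd : IdemData k e) (t : ℕ)
    (h : ∀ q : Fin n, t + 1 ≤ (q : ℕ) → ∀ m : M, e q • m = 0) :
    ∀ q : Fin n, t ≤ (q : ℕ) → ∀ x : ↥(LinearMap.ker (bigEps k e M)), e q • x = 0 := by
  intro q hq x
  have key : ∀ y : PB k e M, ∃ v : ↥(VpSet e M q),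
      e q • y = DirectSum.lof R (Fin n) (fun p => TP k e M p) q
        ((⟨e q, e_mem_Lmod k e hd q⟩ : ↥(Lmod e q)) ⊗ₜ[k] v) := by
    intro y
    induction y using DirectSum.induction_on with
    | zero => exact ⟨0, by rw [smul_zero, TensorProduct.tmul_zero, map_zero]⟩
    | of p z =>
        rw [← DirectSum.lof_eq_of R]
        induction z using TensorProduct.induction_on with
        | zero => exact ⟨0, by rw [map_zero, smul_zero, TensorProduct.tmul_zero, map_zero]⟩
        | tmul a v' =>
            rcases lt_trichotomy p q with hpq | hpq | hpq
            · refine ⟨0, ?_⟩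
              rw [TensorProduct.tmul_zero, map_zero, ← map_smul]
              have ha : e q • a = (0 : ↥(Lmod e p)) := Subtype.ext (by
                show e q • (a : R) = 0
                rw [smul_eq_mul]
                exact e_mul_Lmod_eq_zero k e hd hpq a.2)
              rw [TensorProduct.smul_tmul', ha, TensorProduct.zero_tmul, map_zero]
            · subst hpq
              obtain ⟨c, hc⟩ := e_mul_Lmod_diag k e hd a.2
              refine ⟨c • v', ?_⟩
              rw [← map_smul]
              congr 1
              have ha : e p • a = c • (⟨e p, e_mem_Lmod k e hd p⟩ : ↥(Lmod e p)) :=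
                Subtype.ext (by
                  show e p • (a : R) = c • e p
                  rw [smul_eq_mul]; exact hc)
              rw [TensorProduct.smul_tmul', ha, TensorProduct.smul_tmul]
            · obtain ⟨m', hm'⟩ := v'.2
              have hv' : v' = 0 := Subtype.ext (by
                show (v' : M) = 0
                rw [← hm']
                exact h p (by omega) m')
              refine ⟨0, ?_⟩
              rw [hv', TensorProduct.tmul_zero, TensorProduct.tmul_zero, map_zero, map_zero,
                smul_zero]
        | add z1 z2 h1 h2 =>
            obtain ⟨w1, hw1⟩ := h1
            obtain ⟨w2, hw2⟩ := h2
            exact ⟨w1 + w2, by rw [map_add, smul_add, hw1, hw2, TensorProduct.tmul_add, map_add]⟩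
    | add y1 y2 h1 h2 =>
        obtain ⟨w1, hw1⟩ := h1
        obtain ⟨w2, hw2⟩ := h2
        exact ⟨w1 + w2, by rw [smul_add, hw1, hw2, TensorProduct.tmul_add, map_add]⟩
  obtain ⟨v, hv⟩ := key (x : PB k e M)
  have h0 : bigEps k e M (e q • (x : PB k e M)) = 0 := by
    rw [map_smul, LinearMap.mem_ker.1 x.2, smul_zero]
  rw [hv, bigEps_lof, epsC_tmul] at h0
  have hvv : (v : M) = 0 := by
    obtain ⟨m', hm'⟩ := v.2
    have h1 : e q • (v : M) = (v : M) := by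
      rw [← hm']
      show e q • e q • m' = e q • m'
      rw [smul_smul, hd.idem]
    rw [← h1]
    exact h0
  have hv0 : v = 0 := Subtype.ext hvv
  rw [hv0, TensorProduct.tmul_zero, map_zero] at hv
  apply Subtype.ext
  show e q • (x : PB k e M) = 0
  exact hv

end ModuleConstr

/-- A bundled `R`-module. -/
structure RM (R : Type u) [Ring R] : Type (u + 1) where
  X : Type u
  [acg : AddCommGroup X]
  [mod : Module R X]

attribute [instance] RM.acg RM.mod

/-- The syzygy construction. -/
noncomputable def SyzRM (N : RM R) : RM R :=
  { X := ↥(LinearMap.ker (bigEps k e N.X)) }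

/-- Iterated syzygies. -/
noncomputable def SyzI (M : Type u) [AddCommGroup M] [Module R M] : ℕ → RM R
  | 0 => { X := M }
  | i + 1 => SyzRM k e (SyzI M i)

lemma exact_ker_comp_aux {A B C : Type u} [AddCommGroup A] [Module R A] [AddCommGroup B]
    [Module R B] [AddCommGroup C] [Module R C] (g : B →ₗ[R] C) (f : A →ₗ[R] ↥(LinearMap.ker g))
    (hf : Function.Surjective f) : Function.Exact ((LinearMap.ker g).subtype ∘ₗ f) g := by
  rw [LinearMap.exact_iff, LinearMap.range_comp, LinearMap.range_eq_top.2 hf,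
    Submodule.map_top, Submodule.range_subtype]

/-- The canonical projective resolution. -/
noncomputable def theRes (hd : IdemData k e) (M : Type u) [AddCommGroup M] [Module R M] :
    ProjRes R M where
  P := fun i => PB k e (SyzI k e M i).X
  acg := fun _ => inferInstance
  mod := fun _ => inferInstance
  d := fun i => (LinearMap.ker (bigEps k e (SyzI k e M i).X)).subtype ∘ₗ
        bigEps k e (SyzI k e M (i + 1)).X
  ε := bigEps k e (SyzI k e M 0).X
  proj := fun i => proj_PB k e _ hd
  surj := bigEps_surjective k e (SyzI k e M 0).X hd
  exact0 := by
    exact exact_ker_comp_aux (bigEps k e (SyzI k e M 0).X) (bigEps k e (SyzI k e M (0 + 1)).X)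
      (bigEps_surjective k e (SyzI k e M (0 + 1)).X hd)
  exact := fun i => by
    exact (exact_ker_comp_aux (bigEps k e (SyzI k e M (i + 1)).X)
      (bigEps k e (SyzI k e M (i + 1 + 1)).X)
      (bigEps_surjective k e (SyzI k e M (i + 1 + 1)).X hd)).comp_injective _
      (LinearMap.ker (bigEps k e (SyzI k e M i).X)).injective_subtype (map_zero _)

lemma syz_supp (hd : IdemData k e) (M : Type u) [AddCommGroup M] [Module R M] :
    ∀ i (q : Fin n), n - i ≤ (q : ℕ) → ∀ m : (SyzI k e M i).X, e q • m = 0 := by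
  intro i
  induction i with
  | zero =>
      intro q hq m
      exact absurd hq (by have := q.isLt; omega)
  | succ i ih =>
      intro q hq m
      exact supp_step k e _ hd (n - (i + 1)) (fun q' hq' m' => ih q' (by omega) m') q hq m

lemma syz_triv (hd : IdemData k e) (M : Type u) [AddCommGroup M] [Module R M] :
    ∀ i, n ≤ i → ∀ m : (SyzI k e M i).X, m = 0 := by
  intro i hi
  apply modTriv k e _ hd
  intro q m
  exact syz_supp k e hd M i q (by omega) m

theorem abstract_main (hd : IdemData k e) (M : Type u) [AddCommGroup M] [Module R M] :
    ProjDimLE R M n := by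
  refine ⟨theRes k e hd M, ?_⟩
  intro i hi x
  exact PB_triv k e _ (syz_triv k e hd M i (by omega)) x

end Abstract


section FreeAlg

variable (k : Type u) [Field k] (a b n : ℕ)

/-- The `k`-span of the words of length at most `i` in the free algebra
`k⟨x_1, …, x_a⟩`. -/
def wordSpan (i : ℕ) : Submodule k (FreeAlgebra k (Fin a)) :=
  Submodule.span k
    {w | ∃ l : List (Fin a), l.length ≤ i ∧ w = (l.map (FreeAlgebra.ι k)).prod}

variable (y : Fin b → FreeAlgebra k (Fin a))

/-- The finitely presented algebra `S = k⟨x_1, …, x_a⟩ / ⟨y_1, …, y_b⟩` (quotient by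
the two-sided ideal generated by the `y j`). -/
def SP : Type u :=
  RingQuot (fun p q : FreeAlgebra k (Fin a) => ∃ j : Fin b, p = y j ∧ q = 0)

noncomputable instance : Ring (SP k a b y) :=
  inferInstanceAs (Ring (RingQuot (fun p q : FreeAlgebra k (Fin a) =>
    ∃ j : Fin b, p = y j ∧ q = 0)))

noncomputable instance : Algebra k (SP k a b y) :=
  inferInstanceAs (Algebra k (RingQuot (fun p q : FreeAlgebra k (Fin a) =>
    ∃ j : Fin b, p = y j ∧ q = 0)))

/-- The quotient map `k⟨x_1, …, x_a⟩ → S`. -/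
noncomputable def SPmk : FreeAlgebra k (Fin a) →ₐ[k] SP k a b y :=
  RingQuot.mkAlgHom k _

/-- `S_i ⊆ S`: the image in `S` of the `k`-span of the words of length at most `i`. -/
noncomputable def Sdeg (i : ℕ) : Submodule k (SP k a b y) :=
  Submodule.map (SPmk k a b y).toLinearMap (wordSpan k a i)

/-- The set of upper triangular `n × n` matrices `(m_{pq})` over `S` with
`m_{pq} ∈ S_{q-p}` for `q ≥ p` and `m_{pq} = 0` for `q < p`. -/
def upperTriSet : Set (Matrix (Fin n) (Fin n) (SP k a b y)) :=
  {m | ∀ p q : Fin n, (q < p → m p q = 0) ∧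
    ((p : ℕ) ≤ (q : ℕ) → m p q ∈ Sdeg k a b y ((q : ℕ) - (p : ℕ)))}

end FreeAlg

section PartB

variable (k : Type u) [Field k] (a b n : ℕ) (y : Fin b → FreeAlgebra k (Fin a))

lemma one_mem_wordSpan_zero : (1 : FreeAlgebra k (Fin a)) ∈ wordSpan k a 0 :=
  Submodule.subset_span ⟨[], by simp⟩

lemma wordSpan_zero_le : wordSpan k a 0 ≤ Submodule.span k {(1 : FreeAlgebra k (Fin a))} := by
  apply Submodule.span_le.2
  rintro w ⟨l, hl, rfl⟩
  have : l = [] := List.length_eq_zero_iff.1 (Nat.le_zero.1 hl)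
  subst this
  simpa using Submodule.mem_span_singleton_self (1 : FreeAlgebra k (Fin a))

lemma wordSpan_mul_le (i j : ℕ) :
    wordSpan k a i * wordSpan k a j ≤ wordSpan k a (i + j) := by
  rw [wordSpan, wordSpan, Submodule.span_mul_span]
  apply Submodule.span_le.2
  rintro w ⟨w1, ⟨l1, hl1, rfl⟩, w2, ⟨l2, hl2, rfl⟩, rfl⟩
  apply Submodule.subset_span
  exact ⟨l1 ++ l2, by simpa using Nat.add_le_add hl1 hl2, by simp⟩

lemma one_mem_Sdeg_zero : (1 : SP k a b y) ∈ Sdeg k a b y 0 :=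
  ⟨1, one_mem_wordSpan_zero k a, by rw [AlgHom.toLinearMap_apply, map_one (SPmk k a b y)]⟩

lemma Sdeg_zero_le :
    Sdeg k a b y 0 ≤ Submodule.span k {(1 : SP k a b y)} := by
  rintro x ⟨w, hw, rfl⟩
  have := wordSpan_zero_le k a hw
  rw [Submodule.mem_span_singleton] at this
  obtain ⟨c, hc⟩ := this
  rw [Submodule.mem_span_singleton]
  exact ⟨c, by rw [← hc, LinearMap.map_smul, AlgHom.toLinearMap_apply, map_one (SPmk k a b y)]⟩

lemma Sdeg_mul_mem {i j : ℕ} {x z : SP k a b y} (hx : x ∈ Sdeg k a b y i)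
    (hz : z ∈ Sdeg k a b y j) : x * z ∈ Sdeg k a b y (i + j) := by
  obtain ⟨w1, hw1, rfl⟩ := hx
  obtain ⟨w2, hw2, rfl⟩ := hz
  refine ⟨w1 * w2, wordSpan_mul_le k a i j (Submodule.mul_mem_mul hw1 hw2), ?_⟩
  simp [map_mul]

/-- The subalgebra of suitably filtered upper triangular matrices. -/
noncomputable def theC : Subalgebra k (Matrix (Fin n) (Fin n) (SP k a b y)) where
  carrier := upperTriSet k a b n y
  add_mem' := by
    intro m m' hm hm' p q
    refine ⟨fun h => ?_, fun h => ?_⟩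
    · show m p q + m' p q = 0
      rw [(hm p q).1 h, (hm' p q).1 h, add_zero]
    · exact Submodule.add_mem _ ((hm p q).2 h) ((hm' p q).2 h)
  zero_mem' := by
    intro p q
    exact ⟨fun _ => rfl, fun _ => Submodule.zero_mem _⟩
  one_mem' := by
    intro p q
    constructor
    · intro h
      exact Matrix.one_apply_ne (by exact fun hpq => absurd hpq (by rintro rfl; exact lt_irrefl _ h))
    · intro h
      by_cases hpq : p = q
      · subst hpq
        rw [Matrix.one_apply_eq]
        simpa using one_mem_Sdeg_zero k a b y
      · rw [Matrix.one_apply_ne hpq]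
        exact Submodule.zero_mem _
  mul_mem' := by
    intro m m' hm hm' p q
    constructor
    · intro h
      rw [Matrix.mul_apply]
      apply Finset.sum_eq_zero
      intro r _
      rcases lt_or_ge r p with hrp | hpr
      · rw [(hm p r).1 hrp, zero_mul]
      · have : q < r := lt_of_lt_of_le h hpr
        rw [(hm' r q).1 this, mul_zero]
    · intro h
      rw [Matrix.mul_apply]
      apply Submodule.sum_mem
      intro r _
      rcases lt_or_ge r p with hrp | hpr
      · rw [(hm p r).1 hrp, zero_mul]; exact Submodule.zero_mem _
      · rcases lt_or_ge q r with hqr | hrq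
        · rw [(hm' r q).1 hqr, mul_zero]; exact Submodule.zero_mem _
        · have h1 := (hm p r).2 (by exact_mod_cast hpr)
          have h2 := (hm' r q).2 (by exact_mod_cast hrq)
          have h3 := Sdeg_mul_mem k a b y h1 h2
          have harith : ((r : ℕ) - p) + ((q : ℕ) - r) = (q : ℕ) - p := by
            have hpr' : (p : ℕ) ≤ r := hpr
            have hrq' : (r : ℕ) ≤ q := hrq
            omega
          rwa [harith] at h3
  algebraMap_mem' := by
    intro c p q
    constructor
    · intro h
      rw [Matrix.algebraMap_matrix_apply, if_neg (by rintro rfl; exact lt_irrefl _ h)]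
    · intro h
      rw [Matrix.algebraMap_matrix_apply]
      by_cases hpq : p = q
      · subst hpq
        rw [if_pos rfl]
        simpa [Algebra.algebraMap_eq_smul_one] using
          Submodule.smul_mem (Sdeg k a b y 0) c (one_mem_Sdeg_zero k a b y)
      · rw [if_neg hpq]
        exact Submodule.zero_mem _

/-- The diagonal matrix units, as elements of `theC`. -/
noncomputable def eMat (p : Fin n) : ↥(theC k a b n y) :=
  ⟨Matrix.single p p 1, by
    intro r s
    constructor
    · intro h
      exact Matrix.single_apply_of_ne _ _ _ _ _ (by rintro ⟨rfl, rfl⟩; exact lt_irrefl _ h)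
    · intro h
      by_cases hrs : p = r ∧ p = s
      · obtain ⟨rfl, rfl⟩ := hrs
        rw [Matrix.single_apply_same]
        simpa using one_mem_Sdeg_zero k a b y
      · rw [Matrix.single_apply_of_ne _ _ _ _ _ hrs]
        exact Submodule.zero_mem _⟩

lemma EmE (m : Matrix (Fin n) (Fin n) (SP k a b y)) (p q : Fin n) :
    Matrix.single q q 1 * m * Matrix.single p p 1
      = Matrix.single q p (m q p) := by
  ext i j
  by_cases hi : i = q
  · subst hi
    by_cases hj : j = p
    · subst hj
      rw [Matrix.mul_single_apply_same, Matrix.single_mul_apply_same,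
        Matrix.single_apply_same, one_mul, mul_one]
    · rw [Matrix.mul_single_apply_of_ne (hbj := hj),
        Matrix.single_apply_of_ne _ _ _ _ _ (by rintro ⟨-, rfl⟩; exact hj rfl)]
  · rw [Matrix.mul_apply,
      Matrix.single_apply_of_ne _ _ _ _ _ (by rintro ⟨rfl, -⟩; exact hi rfl)]
    apply Finset.sum_eq_zero
    intro r _
    rw [Matrix.single_mul_apply_of_ne (h := hi), zero_mul]

lemma theC_idemdata : IdemData k (eMat k a b n y) := by
  constructor
  · intro p
    apply Subtype.ext
    show Matrix.single p p 1 * Matrix.single p p 1 = Matrix.single p p 1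
    rw [Matrix.single_mul_single_same, one_mul]
  · apply Subtype.ext
    have hcoe : ((∑ p : Fin n, eMat k a b n y p : ↥(theC k a b n y)) :
        Matrix (Fin n) (Fin n) (SP k a b y))
        = ∑ p : Fin n, Matrix.single p p (1 : SP k a b y) :=
      map_sum (theC k a b n y).val _ _
    rw [hcoe]
    show _ = (1 : Matrix (Fin n) (Fin n) (SP k a b y))
    ext i j
    rw [Matrix.sum_apply]
    by_cases hij : i = j
    · subst hij
      rw [Matrix.one_apply_eq]
      rw [Finset.sum_eq_single i
        (fun c _ hc => Matrix.single_apply_of_ne _ _ _ _ _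
          (by rintro ⟨rfl, _⟩; exact hc rfl))
        (fun h => absurd (Finset.mem_univ i) h)]
      exact Matrix.single_apply_same i i 1
    · rw [Matrix.one_apply_ne hij]
      exact Finset.sum_eq_zero fun c _ => Matrix.single_apply_of_ne _ _ _ _ _
        (by rintro ⟨rfl, rfl⟩; exact hij rfl)
  · intro p q r hpq
    apply Subtype.ext
    show Matrix.single q q 1 * (r : Matrix (Fin n) (Fin n) (SP k a b y))
        * Matrix.single p p 1 = 0
    rw [EmE]
    rw [(r.2 q p).1 hpq]
    ext i j
    simp [Matrix.single]
  · intro p r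
    have hmem : (r : Matrix (Fin n) (Fin n) (SP k a b y)) p p ∈ Sdeg k a b y 0 := by
      have := (r.2 p p).2 (le_refl _)
      simpa using this
    have := Sdeg_zero_le k a b y hmem
    rw [Submodule.mem_span_singleton] at this
    obtain ⟨c, hc⟩ := this
    refine ⟨c, ?_⟩
    apply Subtype.ext
    show Matrix.single p p 1 * (r : Matrix (Fin n) (Fin n) (SP k a b y))
        * Matrix.single p p 1 = c • Matrix.single p p 1
    rw [EmE, ← hc, Matrix.smul_single]

end PartB

/-- Let `k` be a field, `a, b, n` positive integers with `n ≥ 2`, and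
`y_1, …, y_b ∈ k⟨x_1, …, x_a⟩` each a `k`-linear combination of words of length at most
`n - 1`.  Let `S = k⟨x_1, …, x_a⟩/(y_1, …, y_b)`, let `S_i` be the image of the span of
words of length at most `i`, and let `C ⊆ Mₙ(S)` be the subalgebra of upper triangular
matrices `(m_{pq})` with `m_{pq} ∈ S_{q-p}`.  Then `C` has finite global dimension:
there is a `d` such that every left `C`-module has projective dimension at most `d`. -/
theorem statement1 (k : Type u) [Field k] (a b n : ℕ) (ha : 0 < a) (hb : 0 < b)
    (hn : 2 ≤ n) (y : Fin b → FreeAlgebra k (Fin a))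
    (hy : ∀ j, y j ∈ wordSpan k a (n - 1)) :
    ∃ C : Subalgebra k (Matrix (Fin n) (Fin n) (SP k a b y)),
      (C : Set (Matrix (Fin n) (Fin n) (SP k a b y))) = upperTriSet k a b n y
      ∧ ∃ d : ℕ, ∀ (M : Type u) [AddCommGroup M] [Module C M], ProjDimLE C M d := by
  refine ⟨theC k a b n y, rfl, n, ?_⟩
  intro M _ _
  exact abstract_main k (eMat k a b n y) (theC_idemdata k a b n y) M
end

section
/- Let n ≥ 1, let A ⊆ M_n(S) be the subring of lower triangular matrices with diagonal entries in the image of k → S, and for 1 ≤ i ≤ n let P_i be the left A-module of column vectors v ∈ S^n with v_j = 0 for j < i and v_i in the image of k → S. If V is a flat k-module, then P_i ⊗_k V is a flat left A-module. -/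
open scoped TensorProduct
open Function

universe u v w

section NCT

variable (A : Type u) [Ring A]

def NCT.rels (X : Type v) (M : Type w) [AddCommGroup X] [Module Aᵐᵒᵖ X]
    [AddCommGroup M] [Module A M] : Submodule ℤ (TensorProduct ℤ X M) :=
  Submodule.span ℤ {z | ∃ (x : X) (a : A) (m : M),
    z = (MulOpposite.op a • x) ⊗ₜ[ℤ] m - x ⊗ₜ[ℤ] (a • m)}

/-- `X ⊗_A M` for a right `A`-module `X` and a left `A`-module `M`. -/
def NCT (X : Type v) (M : Type w) [AddCommGroup X] [Module Aᵐᵒᵖ X]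
    [AddCommGroup M] [Module A M] : Type (max v w) :=
  TensorProduct ℤ X M ⧸ NCT.rels A X M

noncomputable instance (X : Type v) (M : Type w) [AddCommGroup X] [Module Aᵐᵒᵖ X]
    [AddCommGroup M] [Module A M] : AddCommGroup (NCT A X M) :=
  inferInstanceAs (AddCommGroup (TensorProduct ℤ X M ⧸ NCT.rels A X M))

/-- The image of `x ⊗ m` in `X ⊗_A M`. -/
noncomputable def NCT.mk {X : Type v} {M : Type w} [AddCommGroup X] [Module Aᵐᵒᵖ X]
    [AddCommGroup M] [Module A M] (x : X) (m : M) : NCT A X M :=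
  Submodule.Quotient.mk (x ⊗ₜ[ℤ] m)

/-- The map `X ⊗_A M → X ⊗_A M'` induced by a map `M → M'` of left `A`-modules. -/
noncomputable def NCT.lmap {X : Type v} [AddCommGroup X] [Module Aᵐᵒᵖ X]
    {M : Type w} {M' : Type w} [AddCommGroup M] [Module A M] [AddCommGroup M'] [Module A M']
    (f : M →ₗ[A] M') : NCT A X M →ₗ[ℤ] NCT A X M' :=
  Submodule.mapQ _ _ (LinearMap.lTensor X f.toAddMonoidHom.toIntLinearMap) (by
    rw [NCT.rels, Submodule.span_le]
    rintro z ⟨x, a, m, rfl⟩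
    simp only [SetLike.mem_coe, Submodule.mem_comap, map_sub, LinearMap.lTensor_tmul,
      AddMonoidHom.coe_toIntLinearMap, LinearMap.toAddMonoidHom_coe]
    exact Submodule.subset_span ⟨x, a, f m, by show _ = _; erw [map_sub, LinearMap.lTensor_tmul, LinearMap.lTensor_tmul]; simp [map_smul]⟩)

/-- The map `X ⊗_A M → X' ⊗_A M` induced by a map `X → X'` of right `A`-modules. -/
noncomputable def NCT.rmap {X : Type v} {X' : Type v} [AddCommGroup X] [Module Aᵐᵒᵖ X]
    [AddCommGroup X'] [Module Aᵐᵒᵖ X'] {M : Type w} [AddCommGroup M] [Module A M]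
    (f : X →ₗ[Aᵐᵒᵖ] X') : NCT A X M →ₗ[ℤ] NCT A X' M :=
  Submodule.mapQ _ _ (LinearMap.rTensor M f.toAddMonoidHom.toIntLinearMap) (by
    rw [NCT.rels, Submodule.span_le]
    rintro z ⟨x, a, m, rfl⟩
    simp only [SetLike.mem_coe, Submodule.mem_comap, map_sub, LinearMap.rTensor_tmul,
      AddMonoidHom.coe_toIntLinearMap, LinearMap.toAddMonoidHom_coe]
    exact Submodule.subset_span ⟨f x, a, m, by show _ = _; erw [map_sub, LinearMap.rTensor_tmul, LinearMap.rTensor_tmul]; simp [map_smul]⟩)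

/-- A left `A`-module `M` is flat if tensoring with it over `A` preserves
injectivity of maps of right `A`-modules. -/
def NCFlat (M : Type w) [AddCommGroup M] [Module A M] : Prop :=
  ∀ (X X' : Type u) [AddCommGroup X] [Module Aᵐᵒᵖ X] [AddCommGroup X'] [Module Aᵐᵒᵖ X']
    (f : X →ₗ[Aᵐᵒᵖ] X'), Function.Injective f → Function.Injective (NCT.rmap A (M := M) f)

end NCT

variable (k : Type u) (S : Type u) [CommRing k] [Ring S] [Algebra k S] (n : ℕ)

/-- The subring of `n × n` lower triangular matrices over `S` whose diagonal
entries lie in the image of `k → S`. -/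
def lowTri : Subring (Matrix (Fin n) (Fin n) S) where
  carrier := {m | (∀ p q : Fin n, p < q → m p q = 0) ∧
    ∀ p : Fin n, m p p ∈ (algebraMap k S).range}
  zero_mem' := ⟨fun _ _ _ => rfl, fun _ => zero_mem _⟩
  one_mem' := ⟨fun p q h => Matrix.one_apply_ne (ne_of_lt h), fun _ => by
    simpa [Matrix.one_apply] using one_mem (algebraMap k S).range⟩
  add_mem' := fun {a b} ha hb => ⟨fun p q h => by
      simp [Matrix.add_apply, ha.1 p q h, hb.1 p q h],
    fun p => add_mem (ha.2 p) (hb.2 p)⟩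
  neg_mem' := fun {a} ha => ⟨fun p q h => by simp [Matrix.neg_apply, ha.1 p q h],
    fun p => neg_mem (ha.2 p)⟩
  mul_mem' := fun {a b} ha hb => by
    constructor
    · intro p q h
      rw [Matrix.mul_apply]
      apply Finset.sum_eq_zero
      intro l _
      rcases lt_or_ge p l with h' | h'
      · rw [ha.1 p l h', zero_mul]
      · rw [hb.1 l q (lt_of_le_of_lt h' h), mul_zero]
    · intro p
      rw [Matrix.mul_apply]
      rw [Finset.sum_eq_single p]
      · exact mul_mem (ha.2 p) (hb.2 p)
      · intro l _ hl
        rcases lt_or_gt_of_ne hl with h' | h'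
        · rw [hb.1 l p h', mul_zero]
        · rw [ha.1 p l h', zero_mul]
      · intro h; exact absurd (Finset.mem_univ p) h

/-- The space of column vectors `v ∈ Sⁿ` with `v j = 0` for `j < i` and
`v i` in the image of `k → S` (as a `k`-submodule of `Sⁿ`). -/
def Pcol (i : ℕ) : Submodule k (Fin n → S) where
  carrier := {v | (∀ j : Fin n, (j : ℕ) < i → v j = 0) ∧
    ∀ j : Fin n, (j : ℕ) = i → v j ∈ (algebraMap k S).range}
  zero_mem' := ⟨fun _ _ => rfl, fun _ _ => zero_mem _⟩
  add_mem' := fun {a b} ha hb => ⟨fun j hj => by simp [Pi.add_apply, ha.1 j hj, hb.1 j hj],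
    fun j hj => add_mem (ha.2 j hj) (hb.2 j hj)⟩
  smul_mem' := fun c v hv => ⟨fun j hj => by simp [Pi.smul_apply, hv.1 j hj],
    fun j hj => by
      obtain ⟨x, hx⟩ := hv.2 j hj
      exact ⟨c * x, by rw [map_mul, Pi.smul_apply, ← hx, Algebra.smul_def]⟩⟩

lemma mulVec_mem_Pcol {i : ℕ} {a : Matrix (Fin n) (Fin n) S} (ha : a ∈ lowTri k S n)
    {v : Fin n → S} (hv : v ∈ Pcol k S n i) : a.mulVec v ∈ Pcol k S n i := by
  constructor
  · intro j hj
    rw [Matrix.mulVec, dotProduct]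
    apply Finset.sum_eq_zero
    intro l _
    rcases lt_or_ge (l : ℕ) i with h' | h'
    · rw [hv.1 l h', mul_zero]
    · rw [ha.1 j l (by rw [Fin.lt_def]; omega), zero_mul]
  · intro j hj
    have : a.mulVec v j = a j j * v j := by
      rw [Matrix.mulVec, dotProduct]
      rw [Finset.sum_eq_single j]
      · intro l _ hl
        rcases lt_or_gt_of_ne hl with h' | h'
        · rw [hv.1 l (by rw [Fin.lt_def] at h'; omega), mul_zero]
        · rw [ha.1 j l h', zero_mul]
      · intro h; exact absurd (Finset.mem_univ j) h
    rw [this]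
    exact mul_mem (ha.2 j) (hv.2 j hj)

/-- Left action of the subring `lowTri k S n` on the column modules. -/
noncomputable instance Pcol.smulLowTri (i : ℕ) :
    SMul (lowTri k S n) (Pcol k S n i) :=
  ⟨fun a v => ⟨a.1.mulVec v.1, mulVec_mem_Pcol k S n a.2 v.2⟩⟩

noncomputable instance Pcol.moduleLowTri (i : ℕ) :
    Module (lowTri k S n) (Pcol k S n i) where
  smul := (· • ·)
  one_smul v := Subtype.ext (Matrix.one_mulVec v.1)
  mul_smul a b v := Subtype.ext (Matrix.mulVec_mulVec v.1 a.1 b.1).symm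
  smul_zero a := Subtype.ext (Matrix.mulVec_zero a.1)
  smul_add a v w := Subtype.ext (Matrix.mulVec_add a.1 v.1 w.1)
  add_smul a b v := Subtype.ext (Matrix.add_mulVec a.1 b.1 v.1)
  zero_smul v := Subtype.ext (Matrix.zero_mulVec v.1)

@[simp] lemma Pcol.smul_def (i : ℕ) (a : lowTri k S n) (v : Pcol k S n i) :
    (a • v : Pcol k S n i).1 = a.1.mulVec v.1 := rfl

instance Pcol.smulCommClass (i : ℕ) :
    SMulCommClass k (lowTri k S n) (Pcol k S n i) where
  smul_comm c a v := Subtype.ext (Matrix.mulVec_smul a.1 c v.1).symm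

/-- Left action of `lowTri k S n` on the module of all column vectors. -/
noncomputable instance colSMul : SMul (lowTri k S n) (Fin n → S) :=
  ⟨fun a v => a.1.mulVec v⟩

noncomputable instance colModule : Module (lowTri k S n) (Fin n → S) where
  smul := (· • ·)
  one_smul v := Matrix.one_mulVec v
  mul_smul a b v := (Matrix.mulVec_mulVec v a.1 b.1).symm
  smul_zero a := Matrix.mulVec_zero a.1
  smul_add a v w := Matrix.mulVec_add a.1 v w
  add_smul a b v := Matrix.add_mulVec a.1 b.1 v
  zero_smul v := Matrix.zero_mulVec v

/-- Right action of `lowTri k S n` on the module of all row vectors. -/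
noncomputable instance rowSMul : SMul (lowTri k S n)ᵐᵒᵖ (Fin n → S) :=
  ⟨fun a v => Matrix.vecMul v a.unop.1⟩

noncomputable instance rowModule : Module (lowTri k S n)ᵐᵒᵖ (Fin n → S) where
  smul := (· • ·)
  one_smul v := Matrix.vecMul_one v
  mul_smul a b v := by
    show Matrix.vecMul v (b.unop.1 * a.unop.1) = Matrix.vecMul (Matrix.vecMul v b.unop.1) a.unop.1
    rw [Matrix.vecMul_vecMul]
  smul_zero a := Matrix.zero_vecMul a.unop.1
  smul_add a v w := Matrix.add_vecMul a.unop.1 v w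
  add_smul a b v := Matrix.vecMul_add a.unop.1 b.unop.1 v
  zero_smul v := Matrix.vecMul_zero v


section St5Aux

set_option maxHeartbeats 1000000
set_option synthInstance.maxHeartbeats 400000

open MulOpposite TensorProduct

variable {i : ℕ}

/-- The matrix whose `i`-th column is `w` and whose other columns vanish. -/
def colM (hi : i < n) (w : Fin n → S) : Matrix (Fin n) (Fin n) S :=
  Matrix.of fun j l => if l = ⟨i, hi⟩ then w j else 0

lemma colM_mul (hi : i < n) (w w' : Fin n → S) :
    colM S n hi w * colM S n hi w' = colM S n hi (fun j => w j * w' ⟨i, hi⟩) := by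
  ext j l
  rw [Matrix.mul_apply, Finset.sum_eq_single (⟨i, hi⟩ : Fin n)]
  · by_cases h : l = (⟨i, hi⟩ : Fin n) <;> simp [colM, h]
  · intro m _ hm; simp [colM, hm]
  · intro h; exact absurd (Finset.mem_univ _) h

lemma mul_colM (hi : i < n) (a : Matrix (Fin n) (Fin n) S) (w : Fin n → S) :
    a * colM S n hi w = colM S n hi (a.mulVec w) := by
  ext j l
  rw [Matrix.mul_apply]
  by_cases h : l = (⟨i, hi⟩ : Fin n) <;>
    simp [colM, h, Matrix.mulVec, dotProduct]

lemma colM_mulVec (hi : i < n) (w v : Fin n → S) :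
    (colM S n hi w).mulVec v = fun j => w j * v ⟨i, hi⟩ := by
  funext j
  simp only [Matrix.mulVec, dotProduct]
  rw [Finset.sum_eq_single (⟨i, hi⟩ : Fin n)]
  · simp [colM]
  · intro m _ hm; simp [colM, hm]
  · intro h; exact absurd (Finset.mem_univ _) h

lemma colM_add (hi : i < n) (w w' : Fin n → S) :
    colM S n hi (w + w') = colM S n hi w + colM S n hi w' := by
  ext j l
  by_cases h : l = (⟨i, hi⟩ : Fin n) <;> simp [colM, h]

lemma colM_mem (hi : i < n) {w : Fin n → S} (hw : w ∈ Pcol k S n i) :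
    colM S n hi w ∈ lowTri k S n := by
  constructor
  · intro p q hpq
    show (if q = ⟨i, hi⟩ then w p else 0) = 0
    split
    · next h =>
      exact hw.1 p (by subst h; simpa [Fin.lt_def] using hpq)
    · rfl
  · intro p
    show (if p = ⟨i, hi⟩ then w p else 0) ∈ _
    split
    · next h => exact hw.2 p (by simp [h])
    · exact zero_mem _

lemma single_mem (hi : i < n) {s : S} (hs : s ∈ (algebraMap k S).range) :
    Pi.single (⟨i, hi⟩ : Fin n) s ∈ Pcol k S n i := by
  constructor
  · intro j hj
    have hne : j ≠ (⟨i, hi⟩ : Fin n) := Fin.ne_of_val_ne (Nat.ne_of_lt hj)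
    simp [Pi.single_eq_of_ne hne]
  · intro j hj
    have hji : j = (⟨i, hi⟩ : Fin n) := Fin.ext hj
    rw [hji, Pi.single_eq_same]; exact hs

/-- The element of `A` whose `i`-th column is `p`. -/
def ιA (hi : i < n) (p : Pcol k S n i) : lowTri k S n :=
  ⟨colM S n hi p.1, colM_mem k S n hi p.2⟩

/-- The standard basis column vector at index `i`. -/
def ebar (hi : i < n) : Pcol k S n i :=
  ⟨Pi.single ⟨i, hi⟩ 1, single_mem k S n hi ⟨1, map_one _⟩⟩

/-- The idempotent `E_{ii}`. -/
def eA (hi : i < n) : lowTri k S n := ιA k S n hi (ebar k S n hi)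

/-- `c·E_{ii}` for `c : k`. -/
def eKA (hi : i < n) (c : k) : lowTri k S n :=
  ⟨colM S n hi (Pi.single ⟨i, hi⟩ (algebraMap k S c)), colM_mem k S n hi (single_mem k S n hi ⟨c, rfl⟩)⟩

lemma ιA_mul_eA (hi : i < n) (p : Pcol k S n i) :
    ιA k S n hi p * eA k S n hi = ιA k S n hi p :=
  Subtype.ext <| by
    show colM S n hi p.1 * colM S n hi (Pi.single ⟨i, hi⟩ 1) = colM S n hi p.1
    rw [colM_mul]; simp

lemma eKA_mul_eA (hi : i < n) (c : k) : eKA k S n hi c * eA k S n hi = eKA k S n hi c :=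
  Subtype.ext <| by
    show colM S n hi (Pi.single ⟨i, hi⟩ (algebraMap k S c)) * colM S n hi (Pi.single ⟨i, hi⟩ 1) =
      colM S n hi (Pi.single ⟨i, hi⟩ (algebraMap k S c))
    rw [colM_mul]; simp

lemma eKA_one (hi : i < n) : eKA k S n hi 1 = eA k S n hi :=
  Subtype.ext <| by
    show colM S n hi (Pi.single ⟨i, hi⟩ (algebraMap k S 1)) = colM S n hi (Pi.single ⟨i, hi⟩ 1)
    rw [map_one (algebraMap k S)]

lemma eKA_zero (hi : i < n) : eKA k S n hi 0 = 0 :=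
  Subtype.ext <| by
    show colM S n hi (Pi.single ⟨i, hi⟩ (algebraMap k S 0)) = 0
    ext j l
    by_cases h : l = (⟨i, hi⟩ : Fin n) <;> simp [colM, h]

lemma eKA_add (hi : i < n) (c d : k) :
    eKA k S n hi (c + d) = eKA k S n hi c + eKA k S n hi d :=
  Subtype.ext <| by
    show colM S n hi (Pi.single ⟨i, hi⟩ (algebraMap k S (c + d))) =
      colM S n hi (Pi.single ⟨i, hi⟩ (algebraMap k S c)) +
        colM S n hi (Pi.single ⟨i, hi⟩ (algebraMap k S d))
    rw [← colM_add]
    congr 1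
    rw [map_add, Pi.single_add]

lemma eKA_mul_eKA (hi : i < n) (c d : k) :
    eKA k S n hi c * eKA k S n hi d = eKA k S n hi (c * d) :=
  Subtype.ext <| by
    show colM S n hi (Pi.single ⟨i, hi⟩ (algebraMap k S c)) *
        colM S n hi (Pi.single ⟨i, hi⟩ (algebraMap k S d)) =
      colM S n hi (Pi.single ⟨i, hi⟩ (algebraMap k S (c * d)))
    rw [colM_mul]
    ext j l
    by_cases h : j = (⟨i, hi⟩ : Fin n) <;> by_cases h' : l = (⟨i, hi⟩ : Fin n) <;>
      simp [colM, h, h', map_mul]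

lemma ιA_mul_eKA (hi : i < n) (p : Pcol k S n i) (c : k) :
    ιA k S n hi p * eKA k S n hi c = ιA k S n hi (c • p) :=
  Subtype.ext <| by
    show colM S n hi p.1 * colM S n hi (Pi.single ⟨i, hi⟩ (algebraMap k S c)) = colM S n hi (c • p.1)
    rw [colM_mul]
    ext j l
    by_cases h : l = (⟨i, hi⟩ : Fin n) <;>
      simp [colM, h, Algebra.smul_def, Algebra.commutes]

lemma mul_ιA (hi : i < n) (a : lowTri k S n) (p : Pcol k S n i) :
    a * ιA k S n hi p = ιA k S n hi (a • p) :=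
  Subtype.ext <| mul_colM S n hi a.1 p.1

lemma ιA_add (hi : i < n) (p q : Pcol k S n i) :
    ιA k S n hi (p + q) = ιA k S n hi p + ιA k S n hi q :=
  Subtype.ext <| colM_add S n hi p.1 q.1

lemma ιA_smul_ebar (hi : i < n) (p : Pcol k S n i) :
    ιA k S n hi p • ebar k S n hi = p :=
  Subtype.ext <| by
    show (colM S n hi p.1).mulVec (Pi.single ⟨i, hi⟩ 1) = p.1
    rw [colM_mulVec]; simp

lemma eKA_smul_ebar (hi : i < n) (c : k) :
    eKA k S n hi c • ebar k S n hi = c • ebar k S n hi :=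
  Subtype.ext <| by
    show (colM S n hi (Pi.single ⟨i, hi⟩ (algebraMap k S c))).mulVec (Pi.single ⟨i, hi⟩ 1) =
      c • ((Pi.single (⟨i, hi⟩ : Fin n) (1 : S) : Fin n → S))
    rw [colM_mulVec]
    funext j
    by_cases h : j = (⟨i, hi⟩ : Fin n)
    · subst h; simp [Algebra.smul_def]
    · simp [h]

/-- The subgroup of a right `A`-module fixed by `E_{ii}`. -/
def fixSub (hi : i < n) (X : Type u) [AddCommGroup X] [Module (lowTri k S n)ᵐᵒᵖ X] :
    AddSubgroup X where
  carrier := {x | op (eA k S n hi) • x = x}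
  add_mem' := by
    intro a b ha hb
    simp only [Set.mem_setOf_eq] at *
    rw [smul_add, ha, hb]
  zero_mem' := smul_zero _
  neg_mem' := by
    intro a ha
    simp only [Set.mem_setOf_eq] at *
    rw [smul_neg, ha]

lemma fix_spec {hi : i < n} {X : Type u} [AddCommGroup X] [Module (lowTri k S n)ᵐᵒᵖ X]
    (y : ↥(fixSub k S n hi X)) : op (eA k S n hi) • y.1 = y.1 := y.2

noncomputable instance fixSMul {hi : i < n} {X : Type u} [AddCommGroup X]
    [Module (lowTri k S n)ᵐᵒᵖ X] : SMul k ↥(fixSub k S n hi X) :=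
  ⟨fun c x => ⟨op (eKA k S n hi c) • x.1, by
    show op (eA k S n hi) • _ = _
    rw [← mul_smul, ← MulOpposite.op_mul, eKA_mul_eA]⟩⟩

@[simp] lemma fix_smul_coe {hi : i < n} {X : Type u} [AddCommGroup X]
    [Module (lowTri k S n)ᵐᵒᵖ X] (c : k) (y : ↥(fixSub k S n hi X)) :
    (c • y).1 = op (eKA k S n hi c) • y.1 := rfl

noncomputable instance fixModule {hi : i < n} {X : Type u} [AddCommGroup X]
    [Module (lowTri k S n)ᵐᵒᵖ X] : Module k ↥(fixSub k S n hi X) where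
  smul := (· • ·)
  one_smul x := Subtype.ext <| by
    show op (eKA k S n hi 1) • x.1 = x.1
    rw [eKA_one, fix_spec]
  mul_smul c d x := Subtype.ext <| by
    show op (eKA k S n hi (c * d)) • x.1 = op (eKA k S n hi c) • (op (eKA k S n hi d) • x.1)
    rw [← mul_smul, ← MulOpposite.op_mul, eKA_mul_eKA, mul_comm d c]
  smul_zero c := Subtype.ext (smul_zero _)
  smul_add c x y := Subtype.ext (smul_add _ _ _)
  add_smul c d x := Subtype.ext <| by
    show op (eKA k S n hi (c + d)) • x.1 = op (eKA k S n hi c) • x.1 + op (eKA k S n hi d) • x.1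
    rw [eKA_add, MulOpposite.op_add, add_smul]
  zero_smul x := Subtype.ext <| by
    show op (eKA k S n hi 0) • x.1 = 0
    rw [eKA_zero, MulOpposite.op_zero, zero_smul]

/-- For `x : X`, the `k`-linear map `P → Xe`, `p ↦ x · ι(p)`. -/
noncomputable def psiL (hi : i < n) {X : Type u} [AddCommGroup X]
    [Module (lowTri k S n)ᵐᵒᵖ X] (x : X) : Pcol k S n i →ₗ[k] ↥(fixSub k S n hi X) where
  toFun p := ⟨op (ιA k S n hi p) • x, by
    show op (eA k S n hi) • _ = _
    rw [← mul_smul, ← MulOpposite.op_mul, ιA_mul_eA]⟩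
  map_add' p q := Subtype.ext <| by
    show op (ιA k S n hi (p + q)) • x = op (ιA k S n hi p) • x + op (ιA k S n hi q) • x
    rw [ιA_add, MulOpposite.op_add, add_smul]
  map_smul' c p := Subtype.ext <| by
    show op (ιA k S n hi (c • p)) • x = op (eKA k S n hi c) • (op (ιA k S n hi p) • x)
    rw [← mul_smul, ← MulOpposite.op_mul, ιA_mul_eKA]

lemma psiL_add (hi : i < n) {X : Type u} [AddCommGroup X]
    [Module (lowTri k S n)ᵐᵒᵖ X] (x y : X) :
    psiL k S n hi (x + y) = psiL k S n hi x + psiL k S n hi y :=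
  LinearMap.ext fun p => Subtype.ext (smul_add _ _ _)

variable (V : Type u) [AddCommGroup V] [Module k V]

noncomputable def PhiHom (hi : i < n) (X : Type u) [AddCommGroup X]
    [Module (lowTri k S n)ᵐᵒᵖ X] :
    X →+ (Pcol k S n i ⊗[k] V →+ ↥(fixSub k S n hi X) ⊗[k] V) :=
  AddMonoidHom.mk' (fun x => (LinearMap.rTensor V (psiL k S n hi x)).toAddMonoidHom)
    (fun x y => by
      refine AddMonoidHom.ext fun t => ?_
      simp only [LinearMap.toAddMonoidHom_coe, AddMonoidHom.add_apply]
      rw [psiL_add, LinearMap.rTensor_add, LinearMap.add_apply])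

lemma PhiHom_balanced (hi : i < n) (X : Type u) [AddCommGroup X]
    [Module (lowTri k S n)ᵐᵒᵖ X] (r : ℤ) (x : X) (m : Pcol k S n i ⊗[k] V) :
    PhiHom k S n V hi X (r • x) m = PhiHom k S n V hi X x (r • m) := by
  show (PhiHom k S n V hi X).flip m (r • x) = PhiHom k S n V hi X x (r • m)
  exact (map_zsmul ((PhiHom k S n V hi X).flip m) r x).trans
    ((map_zsmul (PhiHom k S n V hi X x) r m).symm)

/-- The map `X ⊗_A (P ⊗_k V) → Xe ⊗_k V`. -/
noncomputable def Phi (hi : i < n) (X : Type u) [AddCommGroup X]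
    [Module (lowTri k S n)ᵐᵒᵖ X] :
    NCT (lowTri k S n) X (Pcol k S n i ⊗[k] V) →ₗ[ℤ] ↥(fixSub k S n hi X) ⊗[k] V :=
  Submodule.liftQ _
    (TensorProduct.liftAddHom (PhiHom k S n V hi X)
      (PhiHom_balanced k S n V hi X)).toIntLinearMap
    (by
      rw [NCT.rels, Submodule.span_le]
      rintro z ⟨x, a, m, rfl⟩
      simp only [SetLike.mem_coe, LinearMap.mem_ker, map_sub,
        AddMonoidHom.coe_toIntLinearMap, TensorProduct.liftAddHom_tmul]
      show (TensorProduct.liftAddHom (PhiHom k S n V hi X) (PhiHom_balanced k S n V hi X))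
        ((op a • x) ⊗ₜ[ℤ] m - x ⊗ₜ[ℤ] (a • m)) = 0
      rw [map_sub, TensorProduct.liftAddHom_tmul, TensorProduct.liftAddHom_tmul]
      rw [sub_eq_zero]
      induction m using TensorProduct.induction_on with
      | zero => simp
      | tmul p v =>
        show LinearMap.rTensor V (psiL k S n hi (op a • x)) (p ⊗ₜ v) =
          LinearMap.rTensor V (psiL k S n hi x) (a • (p ⊗ₜ[k] v))
        rw [TensorProduct.smul_tmul', LinearMap.rTensor_tmul, LinearMap.rTensor_tmul]
        congr 1
        exact Subtype.ext <| by
          show op (ιA k S n hi p) • (op a • x) = op (ιA k S n hi (a • p)) • x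
          rw [← mul_smul, ← MulOpposite.op_mul, mul_ιA]
      | add m₁ m₂ h₁ h₂ =>
        show (PhiHom k S n V hi X (op a • x)) (m₁ + m₂) = (PhiHom k S n V hi X x) (a • (m₁ + m₂))
        rw [smul_add, map_add, map_add, h₁, h₂])

lemma Phi_mk (hi : i < n) (X : Type u) [AddCommGroup X] [Module (lowTri k S n)ᵐᵒᵖ X]
    (x : X) (m : Pcol k S n i ⊗[k] V) :
    Phi k S n V hi X (Submodule.Quotient.mk (x ⊗ₜ[ℤ] m)) =
      LinearMap.rTensor V (psiL k S n hi x) m := rfl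

lemma NCT_mk_rel {A : Type u} [Ring A] {X : Type v} {M : Type w} [AddCommGroup X]
    [Module Aᵐᵒᵖ X] [AddCommGroup M] [Module A M] (x : X) (a : A) (m : M) :
    (Submodule.Quotient.mk ((MulOpposite.op a • x) ⊗ₜ[ℤ] m) : NCT A X M) =
      Submodule.Quotient.mk (x ⊗ₜ[ℤ] (a • m)) := by
  rw [Submodule.Quotient.eq]
  exact Submodule.subset_span ⟨x, a, m, rfl⟩

/-- The map `Xe ⊗_k V → X ⊗_A (P ⊗_k V)`. -/
noncomputable def Chi (hi : i < n) (X : Type u) [AddCommGroup X]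
    [Module (lowTri k S n)ᵐᵒᵖ X] :
    (↥(fixSub k S n hi X) ⊗[k] V) →+ NCT (lowTri k S n) X (Pcol k S n i ⊗[k] V) :=
  TensorProduct.liftAddHom
    (AddMonoidHom.mk'
      (fun y => AddMonoidHom.mk'
        (fun v => (Submodule.Quotient.mk (y.1 ⊗ₜ[ℤ] ((ebar k S n hi : Pcol k S n i) ⊗ₜ[k] v)) :
          NCT (lowTri k S n) X (Pcol k S n i ⊗[k] V)))
        (fun v w => by
          simp only [TensorProduct.tmul_add, Submodule.Quotient.mk_add]; rfl))
      (fun y z => by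
        refine AddMonoidHom.ext fun v => ?_
        simp only [AddMonoidHom.mk'_apply, AddMonoidHom.add_apply, AddSubgroup.coe_add,
          TensorProduct.add_tmul, Submodule.Quotient.mk_add]; rfl))
    (fun c y v => by
      simp only [AddMonoidHom.mk'_apply, fix_smul_coe]
      show (Submodule.Quotient.mk ((op (eKA k S n hi c) • y.1) ⊗ₜ[ℤ]
          ((ebar k S n hi : Pcol k S n i) ⊗ₜ[k] v)) : NCT (lowTri k S n) X (Pcol k S n i ⊗[k] V)) =
        Submodule.Quotient.mk (y.1 ⊗ₜ[ℤ] ((ebar k S n hi : Pcol k S n i) ⊗ₜ[k] (c • v)))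
      rw [NCT_mk_rel]
      congr 2
      rw [TensorProduct.smul_tmul', eKA_smul_ebar, TensorProduct.smul_tmul])

lemma Chi_tmul (hi : i < n) (X : Type u) [AddCommGroup X] [Module (lowTri k S n)ᵐᵒᵖ X]
    (y : ↥(fixSub k S n hi X)) (v : V) :
    Chi k S n V hi X (y ⊗ₜ[k] v) =
      (Submodule.Quotient.mk (y.1 ⊗ₜ[ℤ] ((ebar k S n hi : Pcol k S n i) ⊗ₜ[k] v)) :
        NCT (lowTri k S n) X (Pcol k S n i ⊗[k] V)) := rfl

lemma chi_phi (hi : i < n) (X : Type u) [AddCommGroup X] [Module (lowTri k S n)ᵐᵒᵖ X]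
    (z : NCT (lowTri k S n) X (Pcol k S n i ⊗[k] V)) :
    Chi k S n V hi X (Phi k S n V hi X z) = z := by
  obtain ⟨t, rfl⟩ := Submodule.Quotient.mk_surjective _ z
  induction t using TensorProduct.induction_on with
  | zero =>
    rw [Submodule.Quotient.mk_zero]
    exact (congrArg (Chi k S n V hi X) (map_zero (Phi k S n V hi X))).trans (map_zero _)
  | tmul x m =>
    induction m using TensorProduct.induction_on with
    | zero =>
      rw [TensorProduct.tmul_zero, Submodule.Quotient.mk_zero]
      exact (congrArg (Chi k S n V hi X) (map_zero (Phi k S n V hi X))).trans (map_zero _)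
    | tmul p v =>
      rw [Phi_mk, LinearMap.rTensor_tmul, Chi_tmul]
      show (Submodule.Quotient.mk
          ((op (ιA k S n hi p) • x) ⊗ₜ[ℤ] ((ebar k S n hi : Pcol k S n i) ⊗ₜ[k] v)) :
        NCT (lowTri k S n) X (Pcol k S n i ⊗[k] V)) =
        (Submodule.Quotient.mk (x ⊗ₜ[ℤ] (p ⊗ₜ[k] v)) :
          NCT (lowTri k S n) X (Pcol k S n i ⊗[k] V))
      rw [NCT_mk_rel]
      congr 2
      rw [TensorProduct.smul_tmul', ιA_smul_ebar]
    | add m₁ m₂ h₁ h₂ =>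
      rw [TensorProduct.tmul_add, Submodule.Quotient.mk_add]
      exact (congrArg (Chi k S n V hi X) (map_add (Phi k S n V hi X)
        (Submodule.Quotient.mk (x ⊗ₜ[ℤ] m₁) : NCT (lowTri k S n) X (Pcol k S n i ⊗[k] V))
        (Submodule.Quotient.mk (x ⊗ₜ[ℤ] m₂)))).trans
        ((map_add (Chi k S n V hi X) _ _).trans (congrArg₂ (· + ·) h₁ h₂))
  | add t₁ t₂ h₁ h₂ =>
    rw [Submodule.Quotient.mk_add]
    exact (congrArg (Chi k S n V hi X) (map_add (Phi k S n V hi X)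
      (Submodule.Quotient.mk t₁) (Submodule.Quotient.mk t₂))).trans
      ((map_add (Chi k S n V hi X) _ _).trans (congrArg₂ (· + ·) h₁ h₂))

/-- The map `Xe → X'e` induced by a right-module map `X → X'`. -/
noncomputable def fixMap (hi : i < n) {X X' : Type u} [AddCommGroup X]
    [Module (lowTri k S n)ᵐᵒᵖ X] [AddCommGroup X'] [Module (lowTri k S n)ᵐᵒᵖ X']
    (f : X →ₗ[(lowTri k S n)ᵐᵒᵖ] X') : ↥(fixSub k S n hi X) →ₗ[k] ↥(fixSub k S n hi X') where
  toFun y := ⟨f y.1, by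
    show op (eA k S n hi) • f y.1 = f y.1
    rw [← map_smul, fix_spec]⟩
  map_add' y z := Subtype.ext (map_add f _ _)
  map_smul' c y := Subtype.ext <| by
    show f (op (eKA k S n hi c) • y.1) = op (eKA k S n hi c) • f y.1
    exact map_smul f _ _

lemma Phi_rmap (hi : i < n) {X X' : Type u} [AddCommGroup X]
    [Module (lowTri k S n)ᵐᵒᵖ X] [AddCommGroup X'] [Module (lowTri k S n)ᵐᵒᵖ X']
    (f : X →ₗ[(lowTri k S n)ᵐᵒᵖ] X')
    (z : NCT (lowTri k S n) X (Pcol k S n i ⊗[k] V)) :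
    Phi k S n V hi X' (NCT.rmap (lowTri k S n) f z) =
      LinearMap.rTensor V (fixMap k S n hi f) (Phi k S n V hi X z) := by
  obtain ⟨t, rfl⟩ := Submodule.Quotient.mk_surjective _ z
  induction t using TensorProduct.induction_on with
  | zero =>
    rw [Submodule.Quotient.mk_zero]
    exact ((congrArg (Phi k S n V hi X')
      (map_zero (NCT.rmap (lowTri k S n) (M := Pcol k S n i ⊗[k] V) f))).trans (map_zero _)).trans
      ((congrArg (LinearMap.rTensor V (fixMap k S n hi f)) (map_zero (Phi k S n V hi X))).trans
        (map_zero _)).symm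
  | tmul x m =>
    have hr : NCT.rmap (lowTri k S n) f
        (Submodule.Quotient.mk (x ⊗ₜ[ℤ] m) : NCT (lowTri k S n) X (Pcol k S n i ⊗[k] V)) =
        (Submodule.Quotient.mk ((f x) ⊗ₜ[ℤ] m) :
          NCT (lowTri k S n) X' (Pcol k S n i ⊗[k] V)) := rfl
    have hpsi : psiL k S n hi (f x) = (fixMap k S n hi f).comp (psiL k S n hi x) :=
      LinearMap.ext fun p => Subtype.ext (map_smul f _ _).symm
    rw [hr, Phi_mk, Phi_mk, hpsi, LinearMap.rTensor_comp, LinearMap.comp_apply]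
  | add t₁ t₂ h₁ h₂ =>
    rw [Submodule.Quotient.mk_add]
    exact ((congrArg (Phi k S n V hi X') (map_add (NCT.rmap (lowTri k S n) (M := Pcol k S n i ⊗[k] V) f)
      (Submodule.Quotient.mk t₁) (Submodule.Quotient.mk t₂))).trans (map_add _ _ _)).trans
      ((congrArg₂ (· + ·) h₁ h₂).trans ((congrArg (LinearMap.rTensor V (fixMap k S n hi f))
        (map_add (Phi k S n V hi X) (Submodule.Quotient.mk t₁) (Submodule.Quotient.mk t₂))).trans
        (map_add _ _ _)).symm)

end St5Aux

set_option maxHeartbeats 1000000 in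
set_option synthInstance.maxHeartbeats 400000 in
/-- Let `k` be a commutative ring and `S` a `k`-algebra flat over `k`.
Let `n ≥ 1`, let `A ⊆ Mₙ(S)` be the subring of lower triangular matrices with diagonal
entries in the image of `k → S`, and for `i < n` let `P_i` be the left `A`-module of
column vectors `v ∈ Sⁿ` with `v_j = 0` for `j < i` and `v_i` in the image of `k → S`.
If `V` is a flat `k`-module, then `P_i ⊗_k V` is a flat left `A`-module. -/
theorem statement5 (k S : Type u) [CommRing k] [Ring S] [Algebra k S] [Module.Flat k S]
    (n : ℕ) (hn : 1 ≤ n) (i : ℕ) (hi : i < n)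
    (V : Type u) [AddCommGroup V] [Module k V] [Module.Flat k V] :
    NCFlat (lowTri k S n) ((Pcol k S n i) ⊗[k] V) := by
  intro X X' _ _ _ _ f hf
  have hfix : Function.Injective (fixMap k S n hi f) := fun y y' h =>
    Subtype.ext (hf (congrArg Subtype.val h))
  have hg : Function.Injective (LinearMap.rTensor V (fixMap k S n hi f)) :=
    Module.Flat.rTensor_preserves_injective_linearMap _ hfix
  intro z z' hzz
  have h2 : Phi k S n V hi X' (NCT.rmap (lowTri k S n) f z) =
      Phi k S n V hi X' (NCT.rmap (lowTri k S n) f z') := by rw [hzz]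
  rw [Phi_rmap, Phi_rmap] at h2
  have h3 := hg h2
  have h4 := congrArg (Chi k S n V hi X) h3
  rwa [chi_phi, chi_phi] at h4
end

section
/- Let n ≥ 1, let A ⊆ M_n(S) be the subring of lower triangular matrices with diagonal entries in the image of k → S, let P_i (1 ≤ i ≤ n) be the column modules as below, and let M = S^n be the right A-module of row vectors. Then for each 1 ≤ i ≤ n the map β_i : M ⊗_A P_i → S determined by (s_1, …, s_n) ⊗ (x_1, …, x_n) ↦ Σ_{j=1}^n s_j x_j is an isomorphism of left S-modules, where M ⊗_A P_i is a left S-module via entrywise left multiplication of S on the row vector factor. -/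
open scoped TensorProduct
open Function

universe u v w

variable (k : Type u) (S : Type u) [CommRing k] [Ring S] [Algebra k S] (n : ℕ)

section Statement7

/-- Relations defining the tensor product `M ⊗_A P_i`, where `M = Sⁿ` is the
`(S, A)`-bimodule of row vectors and `P_i` the column module:  generated by the
elements `(x·a) ⊗ p - x ⊗ (a·p)`. -/
noncomputable def rowTensRels (i : ℕ) :
    Submodule S (TensorProduct ℤ (Fin n → S) (Pcol k S n i)) :=
  Submodule.span S {z | ∃ (x : Fin n → S) (a : lowTri k S n) (p : Pcol k S n i),
    z = (Matrix.vecMul x a.1) ⊗ₜ[ℤ] p - x ⊗ₜ[ℤ] (a • p)}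

/-- The tensor product `M ⊗_A P_i`, a left `S`-module via the row vectors. -/
noncomputable def rowTens (i : ℕ) : Type u :=
  TensorProduct ℤ (Fin n → S) (Pcol k S n i) ⧸ rowTensRels k S n i

noncomputable instance (i : ℕ) : AddCommGroup (rowTens k S n i) :=
  inferInstanceAs (AddCommGroup (TensorProduct ℤ (Fin n → S) (Pcol k S n i) ⧸ rowTensRels k S n i))

noncomputable instance (i : ℕ) : Module S (rowTens k S n i) :=
  inferInstanceAs (Module S (TensorProduct ℤ (Fin n → S) (Pcol k S n i) ⧸ rowTensRels k S n i))

/-- The class of `x ⊗ p` in `M ⊗_A P_i`. -/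
noncomputable def rowTens.mk (i : ℕ) (x : Fin n → S) (p : Pcol k S n i) :
    rowTens k S n i := Submodule.Quotient.mk (x ⊗ₜ[ℤ] p)

/-- The bilinear map `(x, p) ↦ ∑ⱼ xⱼ pⱼ`. -/
noncomputable def betaBil (i : ℕ) : (Fin n → S) →ₗ[S] (Pcol k S n i) →ₗ[ℤ] S where
  toFun x := (AddMonoidHom.mk' (fun p => ∑ j, x j * p.1 j) (by
    intro p q
    simp [mul_add, Finset.sum_add_distrib])).toIntLinearMap
  map_add' x y := by
    ext p
    simp [add_mul, Finset.sum_add_distrib]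
  map_smul' s x := by
    ext p
    simp [smul_eq_mul, Finset.mul_sum, mul_assoc]

/-- The induced `S`-linear map on the full tensor product. -/
noncomputable def betaTens (i : ℕ) :
    TensorProduct ℤ (Fin n → S) (Pcol k S n i) →ₗ[S] S :=
  TensorProduct.AlgebraTensorModule.lift (betaBil k S n i)

lemma betaTens_tmul (i : ℕ) (x : Fin n → S) (p : Pcol k S n i) :
    betaTens k S n i (x ⊗ₜ[ℤ] p) = ∑ j, x j * p.1 j := rfl

lemma betaTens_rels (i : ℕ) : rowTensRels k S n i ≤ LinearMap.ker (betaTens k S n i) := by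
  rw [rowTensRels, Submodule.span_le]
  rintro z ⟨x, a, p, rfl⟩
  simp only [SetLike.mem_coe, LinearMap.mem_ker, map_sub, betaTens_tmul]
  rw [sub_eq_zero]
  simp only [Pcol.smul_def, Matrix.vecMul, Matrix.mulVec, dotProduct]
  simp only [Finset.sum_mul, Finset.mul_sum, mul_assoc]
  exact Finset.sum_comm

/-- Let `k` be a commutative ring and `S` a `k`-algebra flat over `k`.
Let `n ≥ 1`, `A ⊆ Mₙ(S)` the subring of lower triangular matrices with diagonal entries
in the image of `k → S`, `P_i` (for `i < n`) the column modules, and `M = Sⁿ` the right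
`A`-module of row vectors.  Then for each `i < n` the map `β_i : M ⊗_A P_i → S`
determined by `(s_1, …, s_n) ⊗ (x_1, …, x_n) ↦ ∑ⱼ sⱼ xⱼ` is an isomorphism of left
`S`-modules. -/
theorem statement7 (k S : Type u) [CommRing k] [Ring S] [Algebra k S] [Module.Flat k S]
    (n : ℕ) (hn : 1 ≤ n) (i : ℕ) (hi : i < n) :
    ∃ e : rowTens k S n i ≃ₗ[S] S,
      ∀ (x : Fin n → S) (p : Pcol k S n i),
        e (rowTens.mk k S n i x p) = ∑ j : Fin n, x j * p.1 j := by
  classical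
  set i' : Fin n := ⟨i, hi⟩ with hi'
  -- the distinguished generator of `P_i`
  have hp₀ : (Pi.single i' (1 : S) : Fin n → S) ∈ Pcol k S n i := by
    constructor
    · intro j hj
      rw [Pi.single_apply, if_neg]
      intro h; subst h; simp [hi'] at hj
    · intro j hj
      have : j = i' := Fin.ext hj
      subst this
      rw [Pi.single_apply, if_pos rfl]
      exact ⟨1, map_one _⟩
  set p₀ : Pcol k S n i := ⟨Pi.single i' 1, hp₀⟩ with hp₀def
  -- β descends to the quotient
  set β : rowTens k S n i →ₗ[S] S :=
    Submodule.liftQ (rowTensRels k S n i) (betaTens k S n i) (betaTens_rels k S n i) with hβ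
  have hβmk : ∀ (x : Fin n → S) (p : Pcol k S n i),
      β (rowTens.mk k S n i x p) = ∑ j, x j * p.1 j := by
    intro x p
    rfl
  -- the inverse map
  set γ : S →ₗ[S] rowTens k S n i :=
    LinearMap.toSpanSingleton S _ (rowTens.mk k S n i (Pi.single i' 1) p₀) with hγ
  have hsmulmk : ∀ (s : S) (x : Fin n → S) (p : Pcol k S n i),
      s • rowTens.mk k S n i x p = rowTens.mk k S n i (s • x) p := by
    intro s x p
    show Submodule.Quotient.mk (s • (x ⊗ₜ[ℤ] p)) = _
    rw [TensorProduct.smul_tmul']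
    rfl
  have hsingle : ∀ s : S, s • (Pi.single i' (1 : S) : Fin n → S) = Pi.single i' s := by
    intro s
    funext j
    simp [Pi.single_apply, mul_ite]
  have hγs : ∀ s : S, γ s = rowTens.mk k S n i (Pi.single i' s) p₀ := by
    intro s
    rw [hγ, LinearMap.toSpanSingleton_apply, hsmulmk, hsingle]
  -- key: every pure tensor equals its image under γ ∘ β
  have hkey : ∀ (x : Fin n → S) (p : Pcol k S n i),
      rowTens.mk k S n i x p = rowTens.mk k S n i (Pi.single i' (∑ j, x j * p.1 j)) p₀ := by
    intro x p
    -- the matrix with `p` as its `i`-th column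
    set a : Matrix (Fin n) (Fin n) S := fun j l => if l = i' then p.1 j else 0 with ha
    have haA : a ∈ lowTri k S n := by
      constructor
      · intro q r hqr
        rw [ha]
        dsimp only
        split_ifs with h
        · subst h
          exact p.2.1 q (Fin.lt_def.mp hqr)
        · rfl
      · intro q
        rw [ha]
        dsimp only
        split_ifs with h
        · exact p.2.2 q (by rw [h])
        · exact zero_mem _
    have hvec : Matrix.vecMul x a = Pi.single i' (∑ j, x j * p.1 j) := by
      funext l
      rw [Matrix.vecMul, dotProduct, Pi.single_apply]
      split_ifs with h
      · subst h
        congr 1; ext j; rw [ha]; simp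
      · apply Finset.sum_eq_zero
        intro j _
        rw [ha]
        simp [h]
    have hmul : (⟨a, haA⟩ : lowTri k S n) • p₀ = p := by
      apply Subtype.ext
      rw [Pcol.smul_def]
      funext j
      rw [Matrix.mulVec, dotProduct, Finset.sum_eq_single i']
      · show (if i' = i' then p.1 j else 0) * p₀.1 i' = p.1 j
        simp [hp₀def]
      · intro l _ hl
        show (if l = i' then p.1 j else 0) * p₀.1 l = 0
        simp [hl]
      · intro h; exact absurd (Finset.mem_univ i') h
    rw [rowTens.mk, rowTens.mk]; refine (Submodule.Quotient.eq _).mpr ?_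
    have hmem : (Matrix.vecMul x a) ⊗ₜ[ℤ] p₀ - x ⊗ₜ[ℤ] ((⟨a, haA⟩ : lowTri k S n) • p₀) ∈
        rowTensRels k S n i := Submodule.subset_span ⟨x, ⟨a, haA⟩, p₀, rfl⟩
    rw [hvec, hmul] at hmem
    simpa using Submodule.neg_mem _ hmem
  refine ⟨LinearEquiv.ofLinear β γ ?_ ?_, ?_⟩
  · ext
    simp only [LinearMap.coe_comp, Function.comp_apply, LinearMap.id_coe, id_eq]
    rw [hγs, hβmk]
    rw [Finset.sum_eq_single i']
    · simp [hp₀def]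
    · intro l _ hl
      simp [Pi.single_apply, hl]
    · intro h; exact absurd (Finset.mem_univ i') h
  · ext z
    simp only [LinearMap.coe_comp, Function.comp_apply, LinearMap.id_coe, id_eq]
    obtain ⟨w, rfl⟩ := Submodule.Quotient.mk_surjective _ z
    induction w with
    | zero => exact (congrArg γ (map_zero β)).trans (map_zero γ)
    | tmul x p =>
        rw [show (Submodule.Quotient.mk (x ⊗ₜ[ℤ] p) : rowTens k S n i) =
          rowTens.mk k S n i x p from rfl, hβmk, hγs]
        exact (hkey x p).symm
    | add u v hu hv =>
        rw [Submodule.Quotient.mk_add]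
        exact (map_add (γ.comp β) (Submodule.Quotient.mk u) (Submodule.Quotient.mk v)).trans (congrArg₂ (· + ·) hu hv)
  · intro x p
    exact hβmk x p

end Statement7
end

section
/- Let n ≥ 1, let A ⊆ M_n(S) be the subring of lower triangular matrices with diagonal entries in the image of k → S, let P_i (1 ≤ i ≤ n) be the column modules as below, and let N = S^n be the left M_n(S)-module of column vectors. Regard M_n(S) as a right A-module via the inclusion A ⊆ M_n(S). Then for each 1 ≤ i ≤ n the map M_n(S) ⊗_A P_i → N given by matrix–column multiplication, X ⊗ v ↦ Xv, is an isomorphism of left M_n(S)-modules. -/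
open scoped TensorProduct
open Function

universe u v w

variable (k : Type u) (S : Type u) [CommRing k] [Ring S] [Algebra k S] (n : ℕ)

section Statement8

/-- Left action of the full matrix ring `Mₙ(S)` on the column vectors `Sⁿ`. -/
noncomputable instance matColSMul : SMul (Matrix (Fin n) (Fin n) S) (Fin n → S) :=
  ⟨fun X v => X.mulVec v⟩

noncomputable instance matColModule : Module (Matrix (Fin n) (Fin n) S) (Fin n → S) where
  smul := (· • ·)
  one_smul v := Matrix.one_mulVec v
  mul_smul X Y v := (Matrix.mulVec_mulVec v X Y).symm
  smul_zero X := Matrix.mulVec_zero X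
  smul_add X v w := Matrix.mulVec_add X v w
  add_smul X Y v := Matrix.add_mulVec X Y v
  zero_smul v := Matrix.zero_mulVec v

/-- Relations defining `Mₙ(S) ⊗_A P_i`, where `Mₙ(S)` is a right `A`-module via the
inclusion `A ⊆ Mₙ(S)`:  generated by the elements `(X·a) ⊗ p - X ⊗ (a·p)`. -/
noncomputable def matTensRels (i : ℕ) :
    Submodule (Matrix (Fin n) (Fin n) S)
      (TensorProduct ℤ (Matrix (Fin n) (Fin n) S) (Pcol k S n i)) :=
  Submodule.span (Matrix (Fin n) (Fin n) S)
    {z | ∃ (X : Matrix (Fin n) (Fin n) S) (a : lowTri k S n) (p : Pcol k S n i),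
      z = (X * a.1) ⊗ₜ[ℤ] p - X ⊗ₜ[ℤ] (a • p)}

/-- The tensor product `Mₙ(S) ⊗_A P_i`, a left `Mₙ(S)`-module. -/
noncomputable def matTens (i : ℕ) : Type u :=
  TensorProduct ℤ (Matrix (Fin n) (Fin n) S) (Pcol k S n i) ⧸ matTensRels k S n i

noncomputable instance (i : ℕ) : AddCommGroup (matTens k S n i) :=
  inferInstanceAs (AddCommGroup
    (TensorProduct ℤ (Matrix (Fin n) (Fin n) S) (Pcol k S n i) ⧸ matTensRels k S n i))

noncomputable instance (i : ℕ) : Module (Matrix (Fin n) (Fin n) S) (matTens k S n i) :=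
  inferInstanceAs (Module (Matrix (Fin n) (Fin n) S)
    (TensorProduct ℤ (Matrix (Fin n) (Fin n) S) (Pcol k S n i) ⧸ matTensRels k S n i))

/-- The class of `X ⊗ p` in `Mₙ(S) ⊗_A P_i`. -/
noncomputable def matTens.mk (i : ℕ) (X : Matrix (Fin n) (Fin n) S) (p : Pcol k S n i) :
    matTens k S n i := Submodule.Quotient.mk (X ⊗ₜ[ℤ] p)

namespace St8Aux

/-- ℤ-bilinear matrix-vector multiplication. -/
noncomputable def β (i : ℕ) :
    Matrix (Fin n) (Fin n) S →ₗ[ℤ] Pcol k S n i →ₗ[ℤ] (Fin n → S) :=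
  AddMonoidHom.toIntLinearMap
    { toFun := fun X => AddMonoidHom.toIntLinearMap
        { toFun := fun p => X.mulVec p.1
          map_zero' := Matrix.mulVec_zero X
          map_add' := fun p q => Matrix.mulVec_add X p.1 q.1 }
      map_zero' := by ext p; exact congrFun (Matrix.zero_mulVec p.1) _
      map_add' := fun X Y => by ext p; exact congrFun (Matrix.add_mulVec X Y p.1) _ }

@[simp] lemma β_apply (i : ℕ) (X : Matrix (Fin n) (Fin n) S) (p : Pcol k S n i) :
    β k S n i X p = X.mulVec p.1 := rfl

/-- The ℤ-linear lift to the tensor product, upgraded to a map of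
`Mₙ(S)`-modules. -/
noncomputable def f₁ (i : ℕ) :
    TensorProduct ℤ (Matrix (Fin n) (Fin n) S) (Pcol k S n i)
      →ₗ[Matrix (Fin n) (Fin n) S] (Fin n → S) where
  toFun := TensorProduct.lift (β k S n i)
  map_add' := map_add _
  map_smul' := by
    intro X t
    induction t using TensorProduct.induction_on with
    | zero => simp
    | tmul Y p =>
        rw [TensorProduct.smul_tmul']
        show TensorProduct.lift (β k S n i) ((X * Y) ⊗ₜ[ℤ] p) =
          X • TensorProduct.lift (β k S n i) (Y ⊗ₜ[ℤ] p)
        simp only [TensorProduct.lift.tmul, β_apply]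
        show (X * Y).mulVec p.1 = X.mulVec (Y.mulVec p.1)
        rw [← Matrix.mulVec_mulVec]
    | add s t hs ht =>
        show TensorProduct.lift (β k S n i) (X • (s + t)) =
          X • TensorProduct.lift (β k S n i) (s + t)
        rw [smul_add, map_add, map_add, smul_add]
        exact congrArg₂ (· + ·) hs ht

@[simp] lemma f₁_tmul (i : ℕ) (X : Matrix (Fin n) (Fin n) S) (p : Pcol k S n i) :
    f₁ k S n i (X ⊗ₜ[ℤ] p) = X.mulVec p.1 := rfl

lemma rels_le_ker (i : ℕ) : matTensRels k S n i ≤ LinearMap.ker (f₁ k S n i) := by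
  rw [matTensRels, Submodule.span_le]
  rintro z ⟨X, a, p, rfl⟩
  simp only [SetLike.mem_coe, LinearMap.mem_ker, map_sub, f₁_tmul]
  show (X * a.1).mulVec p.1 - X.mulVec (a.1.mulVec p.1) = 0
  rw [← Matrix.mulVec_mulVec, sub_self]

/-- The forward map `Mₙ(S) ⊗_A P_i → Sⁿ`. -/
noncomputable def f (i : ℕ) :
    matTens k S n i →ₗ[Matrix (Fin n) (Fin n) S] (Fin n → S) :=
  (matTensRels k S n i).liftQ (f₁ k S n i) (rels_le_ker k S n i)

@[simp] lemma f_mk (i : ℕ) (X : Matrix (Fin n) (Fin n) S) (p : Pcol k S n i) :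
    f k S n i (matTens.mk k S n i X p) = X.mulVec p.1 := rfl

/-- The matrix whose `i`-th column is `v` and whose other columns vanish. -/
noncomputable def colMat (i : Fin n) (v : Fin n → S) : Matrix (Fin n) (Fin n) S :=
  fun p q => if q = i then v p else 0

lemma colMat_mul (i : Fin n) (X : Matrix (Fin n) (Fin n) S) (v : Fin n → S) :
    colMat S n i (X.mulVec v) = X * colMat S n i v := by
  ext p q
  by_cases h : q = i <;>
    simp [colMat, Matrix.mul_apply, Matrix.mulVec, dotProduct, h]

/-- The basis column vector `e_i` as an element of `P_i`. -/
noncomputable def eCol (i : ℕ) (hi : i < n) : Pcol k S n i :=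
  ⟨Pi.single ⟨i, hi⟩ 1, by
    constructor
    · intro j hj
      exact Pi.single_eq_of_ne (by simp [Fin.ext_iff]; omega) 1
    · intro j hj
      have : j = ⟨i, hi⟩ := Fin.ext hj
      rw [this, Pi.single_eq_same]
      exact one_mem _⟩

lemma colMat_mulVec_single (i : Fin n) (v : Fin n → S) (w : Fin n → S) :
    (colMat S n i w).mulVec (Pi.single i (1 : S)) = w := by
  funext p
  simp [Matrix.mulVec, dotProduct, Pi.single_apply, colMat,
    Finset.sum_ite_eq']

lemma colMat_mem (i : ℕ) (hi : i < n) (p : Pcol k S n i) :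
    colMat S n ⟨i, hi⟩ p.1 ∈ lowTri k S n := by
  constructor
  · intro a b hab
    by_cases h : b = ⟨i, hi⟩
    · subst h
      simpa [colMat] using p.2.1 a (by exact hab)
    · simp [colMat, h]
  · intro j
    by_cases h : j = (⟨i, hi⟩ : Fin n)
    · subst h
      simpa [colMat] using p.2.2 _ rfl
    · simp only [colMat, if_neg h]
      exact zero_mem _

/-- The inverse map `Sⁿ → Mₙ(S) ⊗_A P_i`. -/
noncomputable def g (i : ℕ) (hi : i < n) :
    (Fin n → S) →ₗ[Matrix (Fin n) (Fin n) S] matTens k S n i where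
  toFun v := matTens.mk k S n i (colMat S n ⟨i, hi⟩ v) (eCol k S n i hi)
  map_add' v w := by
    have : colMat S n ⟨i, hi⟩ (v + w) =
        colMat S n ⟨i, hi⟩ v + colMat S n ⟨i, hi⟩ w := by
      ext p q; by_cases h : q = (⟨i, hi⟩ : Fin n) <;> simp [colMat, h]
    unfold matTens.mk
    rw [this, TensorProduct.add_tmul]
    exact Submodule.Quotient.mk_add _
  map_smul' X v := by
    show matTens.mk k S n i (colMat S n ⟨i, hi⟩ (X.mulVec v)) (eCol k S n i hi) =
      X • matTens.mk k S n i (colMat S n ⟨i, hi⟩ v) (eCol k S n i hi)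
    unfold matTens.mk
    show (Submodule.Quotient.mk _ : (TensorProduct ℤ (Matrix (Fin n) (Fin n) S) (Pcol k S n i) ⧸ matTensRels k S n i)) = X • (Submodule.Quotient.mk _ : (TensorProduct ℤ (Matrix (Fin n) (Fin n) S) (Pcol k S n i) ⧸ matTensRels k S n i))
    rw [colMat_mul, ← Submodule.Quotient.mk_smul, TensorProduct.smul_tmul']
    rfl

lemma f_g (i : ℕ) (hi : i < n) (v : Fin n → S) :
    f k S n i (g k S n i hi v) = v := by
  show (colMat S n ⟨i, hi⟩ v).mulVec (Pi.single ⟨i, hi⟩ (1 : S)) = v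
  exact colMat_mulVec_single S n _ v v

lemma g_f (i : ℕ) (hi : i < n) (t : matTens k S n i) :
    g k S n i hi (f k S n i t) = t := by
  obtain ⟨t, rfl⟩ := Submodule.Quotient.mk_surjective _ t
  induction t using TensorProduct.induction_on with
  | zero => show g k S n i hi (f k S n i (0 : matTens k S n i)) = 0; simp only [map_zero]
  | tmul X p =>
      show matTens.mk k S n i (colMat S n ⟨i, hi⟩ (X.mulVec p.1)) (eCol k S n i hi) =
        Submodule.Quotient.mk (X ⊗ₜ[ℤ] p)
      unfold matTens.mk
      show (Submodule.Quotient.mk _ : (TensorProduct ℤ (Matrix (Fin n) (Fin n) S) (Pcol k S n i) ⧸ matTensRels k S n i)) = (Submodule.Quotient.mk _ : (TensorProduct ℤ (Matrix (Fin n) (Fin n) S) (Pcol k S n i) ⧸ matTensRels k S n i))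
      rw [colMat_mul, Submodule.Quotient.eq]
      apply Submodule.subset_span
      refine ⟨X, ⟨colMat S n ⟨i, hi⟩ p.1, colMat_mem k S n i hi p⟩, eCol k S n i hi, ?_⟩
      congr 1
      congr 1
      apply Subtype.ext
      show p.1 = (colMat S n ⟨i, hi⟩ p.1).mulVec (Pi.single ⟨i, hi⟩ (1 : S))
      exact (colMat_mulVec_single S n _ p.1 p.1).symm
  | add s t hs ht =>
      have e : ∀ a b : matTens k S n i,
          g k S n i hi (f k S n i (a + b)) = g k S n i hi (f k S n i a) + g k S n i hi (f k S n i b) :=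
        fun a b => by rw [map_add, map_add]
      rw [Submodule.Quotient.mk_add]
      exact (e _ _).trans (congrArg₂ (· + ·) hs ht)

end St8Aux

/-- Let `k` be a commutative ring and `S` a `k`-algebra flat over `k`.
Let `n ≥ 1`, `A ⊆ Mₙ(S)` the subring of lower triangular matrices with diagonal entries
in the image of `k → S`, `P_i` (for `i < n`) the column modules, and `N = Sⁿ` the left
`Mₙ(S)`-module of column vectors.  Regarding `Mₙ(S)` as a right `A`-module via the
inclusion, for each `i < n` the map `Mₙ(S) ⊗_A P_i → N`, `X ⊗ v ↦ X v`, is an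
isomorphism of left `Mₙ(S)`-modules. -/
theorem statement8 (k S : Type u) [CommRing k] [Ring S] [Algebra k S] [Module.Flat k S]
    (n : ℕ) (hn : 1 ≤ n) (i : ℕ) (hi : i < n) :
    ∃ e : matTens k S n i ≃ₗ[Matrix (Fin n) (Fin n) S] (Fin n → S),
      ∀ (X : Matrix (Fin n) (Fin n) S) (p : Pcol k S n i),
        e (matTens.mk k S n i X p) = X.mulVec p.1 := by
  exact ⟨LinearEquiv.ofLinear (St8Aux.f k S n i) (St8Aux.g k S n i hi)
    (LinearMap.ext (St8Aux.f_g k S n i hi)) (LinearMap.ext (St8Aux.g_f k S n i hi)),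
    fun X p => rfl⟩

end Statement8
end

section
/- Let n ≥ 1, let A ⊆ M_n(S) be the subring of lower triangular matrices with diagonal entries in the image of k → S, and let P_i (1 ≤ i ≤ n) be the column modules as below. For 1 ≤ i ≤ n−1 let s_i : P_n → P_i be the inclusion of P_n as a submodule of P_i. Then for each 1 ≤ i ≤ n−1 the induced map id ⊗ s_i : M_n(S) ⊗_A P_n → M_n(S) ⊗_A P_i is an isomorphism, where M_n(S) is regarded as a right A-module via the inclusion A ⊆ M_n(S). -/
open scoped TensorProduct
open Function

universe u v w

section TT
/-! Tensor product `R ⊗_C P` where `R` is made into a right `C`-module via a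
ring homomorphism `f : C →+* R`, and `P` is a left `C`-module. -/

variable {C : Type u} {R : Type v} [Ring C] [Ring R] (f : C →+* R)

def TT.rels (P : Type w) [AddCommGroup P] [Module C P] :
    Submodule ℤ (TensorProduct ℤ R P) :=
  Submodule.span ℤ {z | ∃ (r : R) (c : C) (p : P),
    z = (r * f c) ⊗ₜ[ℤ] p - r ⊗ₜ[ℤ] (c • p)}

/-- `R ⊗_C P`, with `R` a right `C`-module via `f : C →+* R`. -/
def TT (P : Type w) [AddCommGroup P] [Module C P] : Type (max v w) :=
  TensorProduct ℤ R P ⧸ TT.rels f P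

noncomputable instance (P : Type w) [AddCommGroup P] [Module C P] :
    AddCommGroup (TT f P) :=
  inferInstanceAs (AddCommGroup (TensorProduct ℤ R P ⧸ TT.rels f P))

/-- The class of `r ⊗ p` in `R ⊗_C P`. -/
noncomputable def TT.mk {P : Type w} [AddCommGroup P] [Module C P] (r : R) (p : P) :
    TT f P := Submodule.Quotient.mk (r ⊗ₜ[ℤ] p)

/-- The map `R ⊗_C P → R ⊗_C P'` induced by a map of left `C`-modules. -/
noncomputable def TT.map {P P' : Type w} [AddCommGroup P] [Module C P]
    [AddCommGroup P'] [Module C P'] (g : P →ₗ[C] P') : TT f P →ₗ[ℤ] TT f P' :=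
  Submodule.mapQ _ _ (LinearMap.lTensor R g.toAddMonoidHom.toIntLinearMap) (by
    rw [TT.rels, Submodule.span_le]
    rintro z ⟨r, c, p, rfl⟩
    simp only [SetLike.mem_coe, Submodule.mem_comap, map_sub, LinearMap.lTensor_tmul,
      AddMonoidHom.coe_toIntLinearMap, LinearMap.toAddMonoidHom_coe]
    exact Submodule.subset_span ⟨r, c, g p, by
      show LinearMap.lTensor R g.toAddMonoidHom.toIntLinearMap _ = _
      simp [map_smul]⟩)

end TT

variable (k : Type u) (S : Type u) [CommRing k] [Ring S] [Algebra k S] (n : ℕ)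

lemma Pcol_anti {i j : ℕ} (h : i ≤ j) : Pcol k S n j ≤ Pcol k S n i := by
  rintro v ⟨h1, h2⟩
  constructor
  · intro l hl
    exact h1 l (lt_of_lt_of_le hl h)
  · intro l hl
    rcases eq_or_lt_of_le h with rfl | h'
    · exact h2 l hl
    · rw [h1 l (by omega)]
      exact zero_mem _

section TTlemmas
variable {C : Type u} {R : Type v} [Ring C] [Ring R] (f : C →+* R)
variable {P : Type w} [AddCommGroup P] [Module C P]

lemma TT.mk_mul (r : R) (c : C) (p : P) :
    TT.mk f (r * f c) p = TT.mk f r (c • p) := by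
  rw [TT.mk, TT.mk]
  exact (Submodule.Quotient.eq _).mpr (Submodule.subset_span ⟨r, c, p, rfl⟩)

lemma TT.mk_add_left (r r' : R) (p : P) :
    TT.mk f (r + r') p = TT.mk f r p + TT.mk f r' p := by
  rw [TT.mk, TT.mk, TT.mk, TensorProduct.add_tmul, Submodule.Quotient.mk_add]
  rfl

lemma TT.mk_add_right (r : R) (p p' : P) :
    TT.mk f r (p + p') = TT.mk f r p + TT.mk f r p' := by
  rw [TT.mk, TT.mk, TT.mk, TensorProduct.tmul_add, Submodule.Quotient.mk_add]
  rfl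

lemma TT.mk_zsmul_left (z : ℤ) (r : R) (p : P) :
    TT.mk f (z • r) p = z • TT.mk f r p := by
  rw [TT.mk, TT.mk, ← TensorProduct.smul_tmul', ← Submodule.mkQ_apply,
    ← Submodule.mkQ_apply, map_smul]
  rfl

lemma TT.mk_zsmul_right (z : ℤ) (r : R) (p : P) :
    TT.mk f r (z • p) = z • TT.mk f r p := by
  rw [TT.mk, TT.mk, TensorProduct.tmul_smul, ← Submodule.mkQ_apply,
    ← Submodule.mkQ_apply, map_smul]
  rfl

lemma TT.mk_zero_left (p : P) : TT.mk f (0 : R) p = 0 := by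
  rw [TT.mk, TensorProduct.zero_tmul, Submodule.Quotient.mk_zero]
  rfl

lemma TT.mk_zero_right (r : R) : TT.mk f r (0 : P) = 0 := by
  rw [TT.mk, TensorProduct.tmul_zero, Submodule.Quotient.mk_zero]
  rfl

lemma TT.mk_sum_left {ι : Type*} (s : Finset ι) (g : ι → R) (p : P) :
    TT.mk f (∑ j ∈ s, g j) p = ∑ j ∈ s, TT.mk f (g j) p := by
  classical
  induction s using Finset.induction_on with
  | empty => simp [TT.mk_zero_left]
  | insert _ _ h ih => rw [Finset.sum_insert h, Finset.sum_insert h, TT.mk_add_left, ih]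

lemma TT.mk_sum_right {ι : Type*} (s : Finset ι) (r : R) (g : ι → P) :
    TT.mk f r (∑ j ∈ s, g j) = ∑ j ∈ s, TT.mk f r (g j) := by
  classical
  induction s using Finset.induction_on with
  | empty => simp [TT.mk_zero_right]
  | insert _ _ h ih => rw [Finset.sum_insert h, Finset.sum_insert h, TT.mk_add_right, ih]

lemma TT.map_mk {P' : Type w} [AddCommGroup P'] [Module C P'] (g : P →ₗ[C] P')
    (r : R) (p : P) : TT.map f g (TT.mk f r p) = TT.mk f r (g p) := by
  rfl

end TTlemmas

-- here the section variables (k S : Type u) [CommRing k] [Ring S] [Algebra k S] (n : ℕ)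
-- are in scope

/-- The matrix whose column `c` is `v` and all other columns vanish. -/
def colMat (c : Fin n) (v : Fin n → S) : Matrix (Fin n) (Fin n) S :=
  Matrix.of fun a b => if b = c then v a else 0

lemma mul_colMat (X : Matrix (Fin n) (Fin n) S) (c : Fin n) (v : Fin n → S) :
    X * colMat S n c v = colMat S n c (X.mulVec v) := by
  ext a b
  by_cases h : b = c <;>
    simp [colMat, Matrix.mul_apply, Matrix.mulVec, dotProduct, h]

lemma colMat_zero (c : Fin n) : colMat S n c (0 : Fin n → S) = 0 := by
  ext a b
  simp [colMat]

lemma colMat_add (c : Fin n) (v w : Fin n → S) :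
    colMat S n c (v + w) = colMat S n c v + colMat S n c w := by
  ext a b
  by_cases h : b = c <;> simp [colMat, h]

lemma colMat_zsmul (c : Fin n) (z : ℤ) (v : Fin n → S) :
    colMat S n c (z • v) = z • colMat S n c v := by
  ext a b
  by_cases h : b = c <;> simp [colMat, h]

lemma colMat_sum {ι : Type*} (s : Finset ι) (c : Fin n) (g : ι → Fin n → S) :
    colMat S n c (∑ j ∈ s, g j) = ∑ j ∈ s, colMat S n c (g j) := by
  classical
  induction s using Finset.induction_on with
  | empty => simp [colMat_zero]
  | insert _ _ h ih => rw [Finset.sum_insert h, Finset.sum_insert h, colMat_add, ih]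

/-- The column vector with a single entry `1` in position `c`. -/
def unitV (c : Fin n) : Fin n → S := fun j => if j = c then 1 else 0

lemma colMat_mulVec_unitV (c : Fin n) (v : Fin n → S) :
    (colMat S n c v).mulVec (unitV S n c) = v := by
  funext a
  simp only [Matrix.mulVec, dotProduct, colMat, unitV, Matrix.of_apply]
  rw [Finset.sum_eq_single c]
  · simp
  · intro b _ hb
    simp [hb]
  · intro h
    exact absurd (Finset.mem_univ c) h

lemma unitV_mem {c : Fin n} {i : ℕ} (h : i ≤ (c : ℕ)) : unitV S n c ∈ Pcol k S n i := by
  constructor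
  · intro j hj
    have hj' : j ≠ c := by
      intro hjc
      subst hjc
      omega
    simp [unitV, hj']
  · intro j hj
    by_cases h' : j = c
    · subst h'
      simp only [unitV, if_pos rfl]
      exact one_mem _
    · simp only [unitV, if_neg h']
      exact zero_mem _

lemma colMat_mem {c : Fin n} {v : Fin n → S} (hv : v ∈ Pcol k S n (c : ℕ)) :
    colMat S n c v ∈ lowTri k S n := by
  constructor
  · intro p q hpq
    by_cases h : q = c
    · subst h
      simpa [colMat] using hv.1 p (Fin.lt_def.mp hpq)
    · simp [colMat, h]
  · intro p
    by_cases h : p = c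
    · subst h
      simpa [colMat] using hv.2 p rfl
    · simp only [colMat, Matrix.of_apply, if_neg h]
      exact zero_mem _

/-- The vector keeping only the `j`-th component. -/
def singlePart (p : Fin n → S) (j : Fin n) : Fin n → S := fun l => if l = j then p l else 0

lemma singlePart_mem {i : ℕ} (p : Pcol k S n i) (j : Fin n) :
    singlePart S n p.1 j ∈ Pcol k S n i := by
  constructor
  · intro l hl
    by_cases h : l = j
    · subst h
      simp [singlePart, p.2.1 l hl]
    · simp [singlePart, h]
  · intro l hl
    by_cases h : l = j
    · subst h
      simpa [singlePart] using p.2.2 l hl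
    · simp only [singlePart, if_neg h]
      exact zero_mem _

lemma sum_singlePart (p : Fin n → S) : ∑ j, singlePart S n p j = p := by
  funext l
  simp [singlePart, Finset.sum_apply, Finset.sum_ite_eq]

lemma singlePart_eq_zero {i : ℕ} (p : Pcol k S n i) {j : Fin n} (h : (j : ℕ) < i) :
    singlePart S n p.1 j = 0 := by
  funext l
  by_cases h' : l = j
  · simp [singlePart, h', p.2.1 j h]
  · simp [singlePart, h']

/-- The inclusion of column modules as `lowTri`-linear map. -/
noncomputable def inclC {i j : ℕ} (h : i ≤ j) :
    Pcol k S n j →ₗ[lowTri k S n] Pcol k S n i where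
  toFun p := ⟨p.1, Pcol_anti k S n h p.2⟩
  map_add' _ _ := rfl
  map_smul' _ _ := rfl

lemma keyLemma (hn : 1 ≤ n) {i : ℕ} (hi : i < n - 1)
    (X : Matrix (Fin n) (Fin n) S) (p : Pcol k S n i) :
    TT.mk ((lowTri k S n).subtype) X p =
      TT.mk ((lowTri k S n).subtype) (X * colMat S n ⟨n - 1, by omega⟩ p.1)
        ⟨unitV S n ⟨n - 1, by omega⟩, unitV_mem k S n (Nat.le_of_lt hi)⟩ := by
  set f := (lowTri k S n).subtype
  have hn2 : 2 ≤ n := by omega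
  set N : Fin n := ⟨n - 1, by omega⟩ with hN
  set I : Fin n := ⟨i, by omega⟩ with hI
  set eNi : Pcol k S n i := ⟨unitV S n N, unitV_mem k S n (Nat.le_of_lt hi)⟩
  set eI : Pcol k S n i := ⟨unitV S n I, unitV_mem k S n (le_refl i)⟩
  set q : Fin n → Pcol k S n i := fun j => ⟨singlePart S n p.1 j, singlePart_mem k S n p j⟩
    with hq
  have hcoe : ∑ j, ((q j : Fin n → S)) = (p : Fin n → S) := sum_singlePart S n p.1
  have hsum : p = ∑ j, q j := by
    apply Subtype.ext
    rw [Submodule.coe_sum, hcoe]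
  have hterm : ∀ j : Fin n,
      TT.mk f X (q j) = TT.mk f (X * colMat S n N (q j).1) eNi := by
    intro j
    rcases lt_or_ge (j : ℕ) i with hj | hj
    · have h0 : (q j) = 0 := Subtype.ext (singlePart_eq_zero k S n p hj)
      rw [h0]
      show TT.mk f X (0 : Pcol k S n i) = TT.mk f (X * colMat S n N (0 : Pcol k S n i).1) eNi
      rw [TT.mk_zero_right]
      have : colMat S n N ((0 : Pcol k S n i) : Fin n → S) = 0 := colMat_zero S n N
      rw [this, mul_zero, TT.mk_zero_left]
    · -- main case
      have hc1mem : colMat S n I (q j).1 ∈ lowTri k S n := colMat_mem k S n (q j).2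
      have hc2mem : colMat S n I (unitV S n N) ∈ lowTri k S n :=
        colMat_mem k S n (unitV_mem k S n (Nat.le_of_lt hi))
      have h1 : TT.mk f (X * colMat S n I (q j).1) eI = TT.mk f X (q j) := by
        have hthis := TT.mk_mul f X (⟨_, hc1mem⟩ : lowTri k S n) eI
        have hfc : f (⟨colMat S n I (q j).1, hc1mem⟩ : lowTri k S n)
            = colMat S n I (q j).1 := rfl
        rw [hfc] at hthis
        rw [hthis]
        congr 1
        apply Subtype.ext
        show (colMat S n I (q j).1).mulVec (unitV S n I) = (q j).1
        exact colMat_mulVec_unitV S n I (q j).1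
      have h2 : TT.mk f ((X * colMat S n N (q j).1) * colMat S n I (unitV S n N)) eI
          = TT.mk f (X * colMat S n N (q j).1) eNi := by
        have hthis := TT.mk_mul f (X * colMat S n N (q j).1)
          (⟨_, hc2mem⟩ : lowTri k S n) eI
        have hfc : f (⟨colMat S n I (unitV S n N), hc2mem⟩ : lowTri k S n)
            = colMat S n I (unitV S n N) := rfl
        rw [hfc] at hthis
        rw [hthis]
        congr 1
        apply Subtype.ext
        show (colMat S n I (unitV S n N)).mulVec (unitV S n I) = unitV S n N
        exact colMat_mulVec_unitV S n I (unitV S n N)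
      have h3 : (X * colMat S n N (q j).1) * colMat S n I (unitV S n N)
          = X * colMat S n I (q j).1 := by
        rw [mul_assoc, mul_colMat, colMat_mulVec_unitV]
      rw [← h1, ← h2, h3]
  calc TT.mk f X p = ∑ j, TT.mk f X (q j) := by
        conv_lhs => rw [hsum]
        exact TT.mk_sum_right f Finset.univ X q
    _ = ∑ j, TT.mk f (X * colMat S n N (q j).1) eNi :=
        Finset.sum_congr rfl fun j _ => hterm j
    _ = TT.mk f (X * colMat S n N p.1) eNi := by
        rw [← TT.mk_sum_left, ← Finset.mul_sum, ← colMat_sum]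
        congr 2
        rw [hcoe]

noncomputable def bwdBil (hn : 1 ≤ n) (i : ℕ) :
    Matrix (Fin n) (Fin n) S →ₗ[ℤ] Pcol k S n i →ₗ[ℤ]
      TT ((lowTri k S n).subtype) (Pcol k S n (n - 1)) :=
  LinearMap.mk₂ ℤ
    (fun X p => TT.mk ((lowTri k S n).subtype) (X * colMat S n ⟨n - 1, by omega⟩ p.1)
      ⟨unitV S n ⟨n - 1, by omega⟩, unitV_mem k S n (le_refl (n - 1))⟩)
    (fun X Y p => by rw [add_mul, TT.mk_add_left])
    (fun z X p => by rw [smul_mul_assoc, TT.mk_zsmul_left])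
    (fun X p p' => by
      have : ((p + p' : Pcol k S n i) : Fin n → S) = p.1 + p'.1 := rfl
      rw [this, colMat_add, mul_add, TT.mk_add_left])
    (fun z X p => by
      have : ((z • p : Pcol k S n i) : Fin n → S) = z • p.1 := rfl
      rw [this, colMat_zsmul, mul_smul_comm, TT.mk_zsmul_left])

noncomputable def bwd (hn : 1 ≤ n) (i : ℕ) :
    TT ((lowTri k S n).subtype) (Pcol k S n i) →ₗ[ℤ]
      TT ((lowTri k S n).subtype) (Pcol k S n (n - 1)) :=
  Submodule.liftQ _ (TensorProduct.lift (bwdBil k S n hn i)) (by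
    rw [TT.rels, Submodule.span_le]
    rintro z ⟨r, c, p, rfl⟩
    simp only [SetLike.mem_coe, LinearMap.mem_ker, map_sub, TensorProduct.lift.tmul,
      LinearMap.mk₂_apply, bwdBil]
    refine LinearMap.mem_ker.mpr ?_
    erw [map_sub, TensorProduct.lift.tmul, TensorProduct.lift.tmul]
    simp only [LinearMap.mk₂_apply]
    have hcp : ((c • p : Pcol k S n i) : Fin n → S) = c.1.mulVec p.1 := rfl
    have hfc : (lowTri k S n).subtype c = c.1 := rfl
    rw [hcp, hfc, mul_assoc, mul_colMat, sub_self])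

lemma bwd_mk (hn : 1 ≤ n) (i : ℕ) (X : Matrix (Fin n) (Fin n) S) (p : Pcol k S n i) :
    bwd k S n hn i (TT.mk ((lowTri k S n).subtype) X p) =
      TT.mk ((lowTri k S n).subtype) (X * colMat S n ⟨n - 1, by omega⟩ p.1)
        ⟨unitV S n ⟨n - 1, by omega⟩, unitV_mem k S n (le_refl (n - 1))⟩ := by
  rfl

/-- Let `k` be a commutative ring, `S` a `k`-algebra flat over `k`,
`n ≥ 1`, `A ⊆ Mₙ(S)` the subring of lower triangular matrices with diagonal entries in
the image of `k → S`, and `P_i` (for `i < n`) the column modules; `P_{n-1}` (the last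
one) is contained in every `P_i` and `s_i : P_{n-1} → P_i` denotes the inclusion.  Then
for each `i < n - 1` the induced map `id ⊗ s_i : Mₙ(S) ⊗_A P_{n-1} → Mₙ(S) ⊗_A P_i` is
an isomorphism, where `Mₙ(S)` is a right `A`-module via the inclusion `A ⊆ Mₙ(S)`. -/
theorem statement11 (k S : Type u) [CommRing k] [Ring S] [Algebra k S] [Module.Flat k S]
    (n : ℕ) (hn : 1 ≤ n) (i : ℕ) (hi : i < n - 1) :
    ∃ e : TT ((lowTri k S n).subtype) (Pcol k S n (n - 1)) ≃+
          TT ((lowTri k S n).subtype) (Pcol k S n i),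
      ∀ (X : Matrix (Fin n) (Fin n) S) (p : Pcol k S n (n - 1)),
        e (TT.mk ((lowTri k S n).subtype) X p) =
          TT.mk ((lowTri k S n).subtype) X
            (Submodule.inclusion (Pcol_anti k S n (by omega)) p) := by
  classical
  set f := (lowTri k S n).subtype with hf
  have hNle : (⟨n - 1, by omega⟩ : Fin n) = ⟨n - 1, by omega⟩ := rfl
  set fwd : TT f (Pcol k S n (n - 1)) →ₗ[ℤ] TT f (Pcol k S n i) :=
    TT.map f (inclC k S n (show i ≤ n - 1 by omega)) with hfwd
  have left_inv : ∀ x, bwd k S n hn i (fwd x) = x := by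
    intro x
    obtain ⟨y, rfl⟩ := Submodule.Quotient.mk_surjective _ x
    induction y using TensorProduct.induction_on with
    | zero =>
        show bwd k S n hn i (fwd 0) = 0
        rw [map_zero, map_zero]
    | tmul X p =>
        show bwd k S n hn i (fwd (TT.mk f X p)) = TT.mk f X p
        rw [hfwd, TT.map_mk, bwd_mk]
        have h1 : (inclC k S n (show i ≤ n - 1 by omega) p).1 = p.1 := rfl
        rw [h1]
        have hmem : colMat S n ⟨n - 1, by omega⟩ p.1 ∈ lowTri k S n :=
          colMat_mem k S n p.2
        have hthis := TT.mk_mul f X (⟨_, hmem⟩ : lowTri k S n)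
          (⟨unitV S n ⟨n - 1, by omega⟩, unitV_mem k S n (le_refl (n - 1))⟩ :
            Pcol k S n (n - 1))
        have hfc : f (⟨colMat S n ⟨n - 1, by omega⟩ p.1, hmem⟩ : lowTri k S n)
            = colMat S n ⟨n - 1, by omega⟩ p.1 := rfl
        rw [hfc] at hthis
        rw [hthis]
        congr 1
        apply Subtype.ext
        show (colMat S n ⟨n - 1, by omega⟩ p.1).mulVec (unitV S n ⟨n - 1, by omega⟩) = p.1
        exact colMat_mulVec_unitV S n _ p.1
    | add a b iha ihb =>
        have key : ∀ x y : TT f (Pcol k S n (n - 1)), bwd k S n hn i (fwd x) = x →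
            bwd k S n hn i (fwd y) = y → bwd k S n hn i (fwd (x + y)) = x + y := by
          intro x y hx hy
          rw [map_add, map_add, hx, hy]
        exact key _ _ iha ihb
  have right_inv : ∀ x, fwd (bwd k S n hn i x) = x := by
    intro x
    obtain ⟨y, rfl⟩ := Submodule.Quotient.mk_surjective _ x
    induction y using TensorProduct.induction_on with
    | zero =>
        show fwd (bwd k S n hn i 0) = 0
        rw [map_zero, map_zero]
    | tmul X p =>
        show fwd (bwd k S n hn i (TT.mk f X p)) = TT.mk f X p
        rw [bwd_mk, hfwd, TT.map_mk]
        have h1 : inclC k S n (show i ≤ n - 1 by omega)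
            (⟨unitV S n ⟨n - 1, by omega⟩, unitV_mem k S n (le_refl (n - 1))⟩ :
              Pcol k S n (n - 1)) =
            (⟨unitV S n ⟨n - 1, by omega⟩, unitV_mem k S n (show i ≤ n - 1 by omega)⟩ :
              Pcol k S n i) := rfl
        rw [h1]
        exact (keyLemma k S n hn hi X p).symm
    | add a b iha ihb =>
        have key : ∀ x y : TT f (Pcol k S n i), fwd (bwd k S n hn i x) = x →
            fwd (bwd k S n hn i y) = y → fwd (bwd k S n hn i (x + y)) = x + y := by
          intro x y hx hy
          rw [map_add, map_add, hx, hy]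
        exact key _ _ iha ihb
  refine ⟨{ toFun := fwd, invFun := bwd k S n hn i, left_inv := left_inv,
            right_inv := right_inv, map_add' := map_add fwd }, ?_⟩
  intro X p
  show fwd (TT.mk f X p) = _
  rw [hfwd, TT.map_mk]
  rfl
end
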